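/- arXiv:2310.18128 — 4 statements merged into one kernel-verified Lean document; each statement's English description precedes it below -/
import Mathlib

section
/- Let G be a finite directed graph with nonnegative real arc weights and total arc weight w(G), and let W, W' be two reals with W > w(G) and W' > w(G). For any vertices s and t such that t is reachable from s in G^{+W} (equivalently, in G^{+W'}), it holds that d_{G^{+W'}}(s,t) = d_{G^{+W}}(s,t) + (W' − W)·⌊ d_{G^{+W}}(s,t) / W ⌋. -/
/-- `π` is a path in the digraph with adjacency `Adj` from `s` to `t`:
a nonempty list of pairwise distinct vertices, consecutive ones joined by arcs. -/
def DPath {V : Type*} (Adj : V → V → Prop) (π : List V) (s t : V) : Prop :=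
  π ≠ [] ∧ π.head? = some s ∧ π.getLast? = some t ∧ π.Chain' Adj ∧ π.Nodup

/-- Cost of a path: the sum of the weights of its arcs. -/
noncomputable def dcost {V : Type*} (w : V → V → ℝ) (π : List V) : ℝ :=
  ((π.zip π.tail).map fun p => w p.1 p.2).sum

/-- Minimum cost of a path from `s` to `t`. -/
noncomputable def minCost {V : Type*} (Adj : V → V → Prop) (w : V → V → ℝ)
    (s t : V) : ℝ :=
  sInf {x | ∃ π, DPath Adj π s t ∧ x = dcost w π}

/-- The weights of `G^{+W}`: original arcs keep their weight,
the added reverse arcs have weight `W`. -/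
noncomputable def wplus {V : Type*} (E : V → V → Prop) [DecidableRel E]
    (w : V → V → ℝ) (W : ℝ) : V → V → ℝ :=
  fun u v => if E u v then w u v else W

section Aux

variable {V : Type*} (E : V → V → Prop) [DecidableRel E] (w : V → V → ℝ)

/-- cost of the forward arcs of a path. -/
noncomputable def fcost (π : List V) : ℝ :=
  ((π.zip π.tail).map fun p => if E p.1 p.2 then w p.1 p.2 else 0).sum

/-- number of reverse arcs of a path. -/
def rcount (π : List V) : ℕ :=
  (π.zip π.tail).countP fun p => decide (¬ E p.1 p.2)

lemma dcost_wplus (W : ℝ) (π : List V) :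
    dcost (wplus E w W) π = fcost E w π + W * (rcount E π : ℝ) := by
  unfold dcost wplus fcost rcount
  induction π.zip π.tail with
  | nil => simp
  | cons p l ih =>
    simp only [List.map_cons, List.sum_cons, List.countP_cons, ih]
    by_cases h : E p.1 p.2 <;> simp [h] <;> push_cast <;> ring

lemma zip_nodup {π : List V} (h : π.Nodup) : (π.zip π.tail).Nodup := by
  have h2 : (π.zip π.tail).map Prod.snd = π.tail :=
    List.map_snd_zip (by simpa using Nat.sub_le π.length 1)
  have ht := h.tail
  rw [← h2] at ht
  exact List.Nodup.of_map Prod.snd ht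

lemma fcost_nonneg (hw : ∀ u v, E u v → 0 ≤ w u v) (π : List V) :
    0 ≤ fcost E w π := by
  apply List.sum_nonneg
  intro x hx
  obtain ⟨p, _, rfl⟩ := List.mem_map.1 hx
  by_cases h : E p.1 p.2 <;> simp [h]
  exact hw _ _ h

lemma fcost_le [Fintype V] (hw : ∀ u v, E u v → 0 ≤ w u v) {π : List V}
    (h : π.Nodup) :
    fcost E w π ≤ ∑ u : V, ∑ v : V, if E u v then w u v else 0 := by
  classical
  have hnd := zip_nodup (π := π) h
  rw [fcost, ← List.sum_toFinset _ hnd, ← Fintype.sum_prod_type']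
  apply Finset.sum_le_sum_of_subset_of_nonneg (Finset.subset_univ _)
  intro p _ _
  by_cases hp : E p.1 p.2 <;> simp [hp]
  exact hw _ _ hp

lemma key {T W W' a a' : ℝ} {n n' : ℕ} (ha : 0 ≤ a) (ha' : 0 ≤ a')
    (haT : a ≤ T) (ha'T : a' ≤ T) (hW : T < W) (hW' : T < W')
    (h : a' + W * n' ≤ a + W * n) :
    a' + W' * n' ≤ a + W' * n := by
  have hn : n' ≤ n := by
    by_contra hc
    push_neg at hc
    have h1 : (n : ℝ) + 1 ≤ n' := by exact_mod_cast hc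
    nlinarith
  rcases eq_or_lt_of_le hn with he | hl
  · subst he
    linarith
  · have h1 : (n' : ℝ) + 1 ≤ n := by exact_mod_cast hl
    nlinarith

end Aux

/-- Let `G` be a finite digraph with nonnegative arc weights
and total arc weight `w(G)`, and let `W, W' > w(G)`. The graphs `G^{+W}` and
`G^{+W'}` share the arc set `fun u v => E u v ∨ E v u`. For any vertices `s`
and `t` such that `t` is reachable from `s` in `G^{+W}`, we have
`d_{G^{+W'}}(s,t) = d_{G^{+W}}(s,t) + (W' − W)·⌊d_{G^{+W}}(s,t)/W⌋`. -/
theorem stmt2 {V : Type*} [Fintype V] (E : V → V → Prop) [DecidableRel E]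
    (w : V → V → ℝ) (hw : ∀ u v, E u v → 0 ≤ w u v)
    (W W' : ℝ)
    (hW : (∑ u : V, ∑ v : V, if E u v then w u v else 0) < W)
    (hW' : (∑ u : V, ∑ v : V, if E u v then w u v else 0) < W')
    (s t : V) (hconn : ∃ π, DPath (fun u v => E u v ∨ E v u) π s t) :
    minCost (fun u v => E u v ∨ E v u) (wplus E w W') s t
      = minCost (fun u v => E u v ∨ E v u) (wplus E w W) s t
        + (W' - W) *
          (⌊minCost (fun u v => E u v ∨ E v u) (wplus E w W) s t / W⌋ : ℝ) := by
  classical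
  set T : ℝ := ∑ u : V, ∑ v : V, if E u v then w u v else 0 with hT
  have hT0 : 0 ≤ T := by
    apply Finset.sum_nonneg; intro u _
    apply Finset.sum_nonneg; intro v _
    by_cases h : E u v <;> simp [h]
    exact hw _ _ h
  have hW0 : 0 < W := hT0.trans_lt hW
  set Adj : V → V → Prop := fun u v => E u v ∨ E v u with hAdj
  set S : ℝ → Set ℝ := fun X => {x | ∃ π, DPath Adj π s t ∧ x = dcost (wplus E w X) π}
    with hS
  have hfin : ∀ X, (S X).Finite := by
    intro X
    apply Set.Finite.subset
      ((List.finite_length_le V (Fintype.card V)).image (dcost (wplus E w X)))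
    rintro x ⟨π, hπ, rfl⟩
    exact ⟨π, hπ.2.2.2.2.length_le_card, rfl⟩
  have hne : ∀ X, (S X).Nonempty := by
    intro X
    obtain ⟨π, hπ⟩ := hconn
    exact ⟨_, π, hπ, rfl⟩
  have hmem : sInf (S W) ∈ S W := (hne W).csInf_mem (hfin W)
  obtain ⟨π₀, hπ₀, hm0⟩ := hmem
  set a₀ := fcost E w π₀ with ha₀def
  set n₀ := rcount E π₀ with hn₀def
  have ha₀ : 0 ≤ a₀ := fcost_nonneg E w hw π₀
  have ha₀T : a₀ ≤ T := fcost_le E w hw hπ₀.2.2.2.2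
  have hd : sInf (S W) = a₀ + W * n₀ := hm0.trans (dcost_wplus E w W π₀)
  have hmc : minCost Adj (wplus E w W) s t = sInf (S W) := rfl
  have hmc' : minCost Adj (wplus E w W') s t = sInf (S W') := rfl
  have hfl : ⌊(a₀ + W * n₀) / W⌋ = (n₀ : ℤ) := by
    rw [Int.floor_eq_iff]
    constructor
    · rw [le_div_iff₀ hW0]; push_cast; nlinarith
    · rw [div_lt_iff₀ hW0]; push_cast; nlinarith
  rw [hmc, hmc', hd, hfl]
  have hgoal : a₀ + W * ↑n₀ + (W' - W) * (n₀ : ℝ) = a₀ + W' * n₀ := by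
    push_cast; ring
  push_cast
  rw [hgoal]
  apply le_antisymm
  · apply csInf_le (hfin W').bddBelow
    exact ⟨π₀, hπ₀, by rw [dcost_wplus]⟩
  · apply le_csInf (hne W')
    rintro x ⟨π, hπ, rfl⟩
    rw [dcost_wplus]
    have hle : a₀ + W * n₀ ≤ fcost E w π + W * (rcount E π : ℝ) := by
      rw [← hd, ← dcost_wplus]
      exact csInf_le (hfin W).bddBelow ⟨π, hπ, rfl⟩
    exact key (fcost_nonneg E w hw π) ha₀ (fcost_le E w hw hπ.2.2.2.2) ha₀T hW hW' hle
end

section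
/- In the DTW lower-bound construction, let B₁ and B₂ be two blocks that are horizontally or vertically adjacent. Then for every u = (i,j) ∈ B₁ and v = (x,y) ∈ B₂ with i ≤ x and j ≤ y, the minimum cost of an xy-monotone path from u to v in the induced vertex-weighted grid equals 4U⁵ + 10U⁴. -/
/-- A single step of an xy-monotone path in the grid:
coordinates change by (1,0), (0,1), or (1,1). -/
def MStep (u v : ℕ × ℕ) : Prop :=
  (v.1 = u.1 + 1 ∧ v.2 = u.2) ∨ (v.1 = u.1 ∧ v.2 = u.2 + 1) ∨
    (v.1 = u.1 + 1 ∧ v.2 = u.2 + 1)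

/-- `π` is an xy-monotone path from `s` to `t`. -/
def MPath (π : List (ℕ × ℕ)) (s t : ℕ × ℕ) : Prop :=
  π ≠ [] ∧ π.head? = some s ∧ π.getLast? = some t ∧ π.Chain' MStep

/-- Cost of a path in a vertex-weighted grid: sum of the weights of all its
vertices. -/
noncomputable def vcost (w : ℕ × ℕ → ℝ) (π : List (ℕ × ℕ)) : ℝ :=
  (π.map w).sum

/-- The point `⋆ = −U⁵`. -/
noncomputable def starPt (U : ℕ) : ℝ := -(U : ℝ) ^ 5

/-- The `o`-th point (offsets `0,…,19`) of the 20-point curve `α_i`: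
eight copies of `⋆`, then `α_i¹,…,α_i⁴`, then eight copies of `⋆`. -/
noncomputable def alphaVal (U : ℕ) (r d : ℕ → ℕ) (i o : ℕ) : ℝ :=
  if o = 8 then (U : ℝ) ^ 4 + 2 * (r i) * (U : ℝ) ^ 3 + (d i) / 4
  else if o = 9 then 2 * (U : ℝ) ^ 4 + 2 * (r i) * (U : ℝ) ^ 3 - (d i) / 4
  else if o = 10 then 3 * (U : ℝ) ^ 4 - 2 * (r i) * (U : ℝ) ^ 3 + (d i) / 4
  else if o = 11 then 4 * (U : ℝ) ^ 4 - 2 * (r i) * (U : ℝ) ^ 3 - (d i) / 4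
  else starPt U

/-- The `o`-th point (offsets `0,…,19`) of the 20-point curve `β_j`:
eight copies of `⋆`, then `β_j¹,…,β_j⁴`, then eight copies of `⋆`. -/
noncomputable def betaVal (U : ℕ) (c b : ℕ → ℕ) (j o : ℕ) : ℝ :=
  if o = 8 then (U : ℝ) ^ 4 + 2 * (c j) * (U : ℝ) ^ 3 - U
  else if o = 9 then 2 * (U : ℝ) ^ 4 + 2 * (c j) * (U : ℝ) ^ 3 + U
  else if o = 10 then 3 * (U : ℝ) ^ 4 - 2 * (c j) * (U : ℝ) ^ 3 + (-1 : ℝ) ^ (b j) * U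
  else if o = 11 then 4 * (U : ℝ) ^ 4 - 2 * (c j) * (U : ℝ) ^ 3 - (-1 : ℝ) ^ (b j) * U
  else starPt U

/-- The curve `P` (1-indexed, of length `20·n_r`): concatenation of
`α_0, …, α_{n_r−1}`. -/
noncomputable def Pcur (U : ℕ) (r d : ℕ → ℕ) (k : ℕ) : ℝ :=
  alphaVal U r d ((k - 1) / 20) ((k - 1) % 20)

/-- The curve `Q` (1-indexed, of length `20·n_c`): concatenation of
`β_0, …, β_{n_c−1}`. -/
noncomputable def Qcur (U : ℕ) (c b : ℕ → ℕ) (k : ℕ) : ℝ :=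
  betaVal U c b ((k - 1) / 20) ((k - 1) % 20)


/-- The set of orange vertices of the grid: both curve points equal `⋆`. -/
noncomputable def orangeSet (nr nc U : ℕ) (r d c b : ℕ → ℕ) : Set (ℕ × ℕ) :=
  {v | 1 ≤ v.1 ∧ v.1 ≤ 20 * nr ∧ 1 ≤ v.2 ∧ v.2 ≤ 20 * nc ∧
    Pcur U r d v.1 = starPt U ∧ Qcur U c b v.2 = starPt U}

/-- Two grid vertices are adjacent if they differ by at most 1 in each
coordinate. -/
def kingAdj (u v : ℕ × ℕ) : Prop :=
  u.1 ≤ v.1 + 1 ∧ v.1 ≤ u.1 + 1 ∧ u.2 ≤ v.2 + 1 ∧ v.2 ≤ u.2 + 1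

/-- `B` is a block: a connected component of the set `O` of orange vertices. -/
def IsBlock (O : Set (ℕ × ℕ)) (B : Set (ℕ × ℕ)) : Prop :=
  ∃ v ∈ O, B = {u | u ∈ O ∧
    Relation.ReflTransGen (fun a b => a ∈ O ∧ b ∈ O ∧ kingAdj a b) v u}

/-- Blocks `B₁`, `B₂` are horizontally adjacent: some grid row intersects them
consecutively, with no vertex of a third block between them on that row. -/
def HorizAdj (O B₁ B₂ : Set (ℕ × ℕ)) : Prop :=
  ∃ x y₁ y₂ : ℕ, y₁ < y₂ ∧
    (((x, y₁) ∈ B₁ ∧ (x, y₂) ∈ B₂) ∨ ((x, y₁) ∈ B₂ ∧ (x, y₂) ∈ B₁)) ∧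
    ∀ y', y₁ < y' → y' < y₂ →
      ∀ B₃, IsBlock O B₃ → B₃ ≠ B₁ → B₃ ≠ B₂ → (x, y') ∉ B₃

/-- Blocks `B₁`, `B₂` are vertically adjacent: some grid column intersects them
consecutively, with no vertex of a third block between them on that column. -/
def VertAdj (O B₁ B₂ : Set (ℕ × ℕ)) : Prop :=
  ∃ y x₁ x₂ : ℕ, x₁ < x₂ ∧
    (((x₁, y) ∈ B₁ ∧ (x₂, y) ∈ B₂) ∨ ((x₁, y) ∈ B₂ ∧ (x₂, y) ∈ B₁)) ∧
    ∀ x', x₁ < x' → x' < x₂ →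
      ∀ B₃, IsBlock O B₃ → B₃ ≠ B₁ → B₃ ≠ B₂ → (x', y) ∉ B₃

lemma mstep_le {u v : ℕ × ℕ} (h : MStep u v) :
    u.1 ≤ v.1 ∧ u.2 ≤ v.2 ∧ v.1 ≤ u.1 + 1 ∧ v.2 ≤ u.2 + 1 := by
  rcases h with ⟨h1, h2⟩ | ⟨h1, h2⟩ | ⟨h1, h2⟩ <;> omega

lemma chain_head_le : ∀ (π : List (ℕ × ℕ)), π.Chain' MStep → ∀ s, π.head? = some s →
    ∀ v ∈ π, s.1 ≤ v.1 ∧ s.2 ≤ v.2 := by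
  intro π
  induction π with
  | nil => intro _ s hs v hv; simp at hv
  | cons a l ih =>
    intro hc s hs v hv
    simp only [List.head?_cons, Option.some_inj] at hs
    subst hs
    rcases List.mem_cons.mp hv with rfl | hv
    · exact ⟨le_refl _, le_refl _⟩
    · cases l with
      | nil => simp at hv
      | cons a' l' =>
        have hstep : MStep a a' := (List.isChain_cons_cons.mp hc).1
        have hc' := (List.isChain_cons_cons.mp hc).2
        have h1 := ih hc' a' rfl v hv
        have h2 := mstep_le hstep
        omega

lemma chain_last_ge : ∀ (π : List (ℕ × ℕ)), π.Chain' MStep → ∀ t, π.getLast? = some t →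
    ∀ v ∈ π, v.1 ≤ t.1 ∧ v.2 ≤ t.2 := by
  intro π
  induction π with
  | nil => intro _ t ht v hv; simp at hv
  | cons a l ih =>
    intro hc t ht v hv
    cases l with
    | nil =>
      simp only [List.getLast?_singleton, Option.some_inj] at ht
      subst ht
      rcases List.mem_cons.mp hv with rfl | hv
      · exact ⟨le_refl _, le_refl _⟩
      · simp at hv
    | cons a' l' =>
      rw [List.getLast?_cons_cons] at ht
      have hstep : MStep a a' := (List.isChain_cons_cons.mp hc).1
      have hc' := (List.isChain_cons_cons.mp hc).2
      rcases List.mem_cons.mp hv with rfl | hv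
      · have htm : t ∈ a' :: l' := List.mem_of_getLast? ht
        have h1 := chain_head_le _ hc' a' rfl t htm
        have h2 := mstep_le hstep
        omega
      · exact ih hc' t ht v hv

noncomputable def Gfun (q : ℕ) (e : ℕ → ℝ) (col : ℕ) : ℝ :=
  (if col ≤ q then e 0 else 0) + (if col ≤ q + 1 then e 1 else 0) +
    (if col ≤ q + 2 then e 2 else 0) + (if col ≤ q + 3 then e 3 else 0)

lemma core_lb (W : ℕ × ℕ → ℝ) (i x q : ℕ) (e : ℕ → ℝ)
    (hW : ∀ v, 0 ≤ W v)
    (hk : ∀ v : ℕ × ℕ, i ≤ v.1 → v.1 ≤ x → ∀ k, k < 4 → v.2 = q + k → W v = e k) :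
    ∀ π : List (ℕ × ℕ), π.Chain' MStep →
      (∀ v ∈ π, i ≤ v.1 ∧ v.1 ≤ x) →
      ∀ t : ℕ × ℕ, π.getLast? = some t → q + 3 < t.2 →
      ∀ a : ℕ × ℕ, π.head? = some a →
      Gfun q e a.2 ≤ vcost W π := by
  intro π
  induction π with
  | nil => intro _ _ t ht _ a ha; simp at ha
  | cons a0 l ih =>
    intro hch hrow t ht ht2 a ha
    simp only [List.head?_cons, Option.some_inj] at ha
    obtain rfl := ha.symm
    cases l with
    | nil =>
      simp only [List.getLast?_singleton, Option.some_inj] at ht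
      subst ht
      have : Gfun q e a.2 = 0 := by
        unfold Gfun
        rw [if_neg (by omega), if_neg (by omega), if_neg (by omega), if_neg (by omega)]
        ring
      rw [this]
      have := hW a
      simp [vcost]
      linarith
    | cons a' l' =>
      rw [List.getLast?_cons_cons] at ht
      have hstep : MStep a a' := (List.isChain_cons_cons.mp hch).1
      have hch' := (List.isChain_cons_cons.mp hch).2
      have hrow' : ∀ v ∈ a' :: l', i ≤ v.1 ∧ v.1 ≤ x := fun v hv => hrow v (by simp [hv])
      have hIH := ih hch' hrow' t ht ht2 a' rfl
      have hcons : vcost W (a :: a' :: l') = W a + vcost W (a' :: l') := by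
        simp [vcost]
      rw [hcons]
      have hcol : a'.2 = a.2 ∨ a'.2 = a.2 + 1 := by
        rcases hstep with ⟨h1, h2⟩ | ⟨h1, h2⟩ | ⟨h1, h2⟩ <;> omega
      have hWa := hW a
      have haiv := hrow a (by simp)
      have hGa' : ∀ z : ℕ, Gfun q e z ≤ W a + Gfun q e (z + 1) ∨ True := fun _ => Or.inr trivial
      have geval : ∀ z : ℕ, z ≤ q → Gfun q e z = e 0 + e 1 + e 2 + e 3 := by
        intro z hz; unfold Gfun
        rw [if_pos (by omega), if_pos (by omega), if_pos (by omega), if_pos (by omega)]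
      have geval4 : ∀ z : ℕ, q + 3 < z → Gfun q e z = 0 := by
        intro z hz; unfold Gfun
        rw [if_neg (by omega), if_neg (by omega), if_neg (by omega), if_neg (by omega)]; ring
      rcases hcol with hcol | hcol
      · have : Gfun q e a.2 = Gfun q e a'.2 := by rw [hcol]
        linarith
      · rcases (by omega : a.2 < q ∨ a.2 = q ∨ a.2 = q + 1 ∨ a.2 = q + 2 ∨ a.2 = q + 3
            ∨ q + 3 < a.2) with h | h | h | h | h | h
        · have h1 := geval a.2 (by omega)
          have h2 : Gfun q e a'.2 = e 0 + e 1 + e 2 + e 3 := geval a'.2 (by omega)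
          linarith
        · have hWe : W a = e 0 := hk a haiv.1 haiv.2 0 (by omega) (by omega)
          have h1 := geval a.2 (by omega)
          have h2 : Gfun q e a'.2 = 0 + e 1 + e 2 + e 3 := by
            unfold Gfun
            rw [if_neg (by omega), if_pos (by omega), if_pos (by omega), if_pos (by omega)]
          linarith
        · have hWe : W a = e 1 := hk a haiv.1 haiv.2 1 (by omega) (by omega)
          have h1 : Gfun q e a.2 = 0 + e 1 + e 2 + e 3 := by
            unfold Gfun
            rw [if_neg (by omega), if_pos (by omega), if_pos (by omega), if_pos (by omega)]
          have h2 : Gfun q e a'.2 = 0 + 0 + e 2 + e 3 := by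
            unfold Gfun
            rw [if_neg (by omega), if_neg (by omega), if_pos (by omega), if_pos (by omega)]
          linarith
        · have hWe : W a = e 2 := hk a haiv.1 haiv.2 2 (by omega) (by omega)
          have h1 : Gfun q e a.2 = 0 + 0 + e 2 + e 3 := by
            unfold Gfun
            rw [if_neg (by omega), if_neg (by omega), if_pos (by omega), if_pos (by omega)]
          have h2 : Gfun q e a'.2 = 0 + 0 + 0 + e 3 := by
            unfold Gfun
            rw [if_neg (by omega), if_neg (by omega), if_neg (by omega), if_pos (by omega)]
          linarith
        · have hWe : W a = e 3 := hk a haiv.1 haiv.2 3 (by omega) (by omega)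
          have h1 : Gfun q e a.2 = 0 + 0 + 0 + e 3 := by
            unfold Gfun
            rw [if_neg (by omega), if_neg (by omega), if_neg (by omega), if_pos (by omega)]
          have h2 := geval4 a'.2 (by omega)
          linarith
        · have h1 := geval4 a.2 (by omega)
          have h2 := geval4 a'.2 (by omega)
          linarith

lemma list_sum_map_range (f : ℕ → ℝ) : ∀ n, ((List.range n).map f).sum = ∑ k ∈ Finset.range n, f k := by
  intro n
  induction n with
  | zero => simp
  | succ n ih =>
    rw [List.range_succ, Finset.sum_range_succ, List.map_append, List.sum_append, ih]
    simp

lemma core (W : ℕ × ℕ → ℝ) (i j x y q : ℕ) (e : ℕ → ℝ)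
    (hix : i ≤ x) (hjq : j < q) (hqy : q + 3 < y)
    (hW : ∀ v, 0 ≤ W v)
    (h0 : ∀ v : ℕ × ℕ, i ≤ v.1 → v.1 ≤ x →
      ((j ≤ v.2 ∧ v.2 < q) ∨ (q + 3 < v.2 ∧ v.2 ≤ y)) → W v = 0)
    (hk : ∀ v : ℕ × ℕ, i ≤ v.1 → v.1 ≤ x → ∀ k, k < 4 → v.2 = q + k → W v = e k) :
    sInf {t : ℝ | ∃ π, MPath π (i, j) (x, y) ∧ t = vcost W π}
      = e 0 + e 1 + e 2 + e 3 := by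
  set N := (y - j) + (x - i) with hN
  set stp : ℕ → ℕ × ℕ := fun k => if k ≤ y - j then (i, j + k) else (i + (k - (y - j)), y)
    with hstp
  set π₀ := (List.range (N + 1)).map stp with hπ₀
  clear_value N stp π₀
  have hne : π₀ ≠ [] := by simp [hπ₀]
  have hhead : π₀.head? = some (i, j) := by
    rw [hπ₀, List.range_succ_eq_map, List.map_cons, List.head?_cons]
    simp [hstp]
  have hlast : π₀.getLast? = some (x, y) := by
    rw [hπ₀, List.range_succ, List.map_append, List.map_cons, List.map_nil]
    rw [List.getLast?_concat]
    have : stp N = (x, y) := by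
      rw [hstp]
      simp only []
      split_ifs with h <;> simp only [Prod.mk.injEq, and_true, true_and] <;> omega
    rw [this]
  have hchain : π₀.Chain' MStep := by
    unfold List.Chain'
    rw [hπ₀, List.isChain_map]
    rw [show N + 1 = Nat.succ N from rfl, List.isChain_range_succ]
    intro m hm
    simp only [hstp, MStep]
    split_ifs with h1 h2 h2 <;>
      simp only [Prod.mk.injEq, and_true, true_and, or_true, true_or] <;> omega
  have hcost : vcost W π₀ = e 0 + e 1 + e 2 + e 3 := by
    rw [hπ₀]
    unfold vcost
    rw [List.map_map, list_sum_map_range]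
    have key : ∀ k ∈ Finset.range (N + 1), (W ∘ stp) k =
        (if k = q - j then e 0 else 0) + (if k = q + 1 - j then e 1 else 0) +
        (if k = q + 2 - j then e 2 else 0) + (if k = q + 3 - j then e 3 else 0) := by
      intro k hkr
      rw [Finset.mem_range] at hkr
      have hkN : k ≤ N := by omega
      simp only [Function.comp_apply]
      rcases (by omega : k < q - j ∨ k = q - j ∨ k = q + 1 - j ∨ k = q + 2 - j ∨
          k = q + 3 - j ∨ (q + 3 - j < k ∧ k ≤ y - j) ∨ y - j < k) with
        h | h | h | h | h | h | h
      · have hs : stp k = (i, j + k) := by simp only [hstp]; rw [if_pos (by omega : k ≤ y - j)]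
        rw [hs, h0 (i, j + k) (le_refl _) hix (by left; constructor <;> omega)]
        rw [if_neg (by omega), if_neg (by omega), if_neg (by omega), if_neg (by omega)]
        ring
      · have hs : stp k = (i, j + k) := by simp only [hstp]; rw [if_pos (by omega : k ≤ y - j)]
        rw [hs, hk (i, j + k) (le_refl _) hix 0 (by omega) (by omega)]
        rw [if_pos h, if_neg (by omega), if_neg (by omega), if_neg (by omega)]
        ring
      · have hs : stp k = (i, j + k) := by simp only [hstp]; rw [if_pos (by omega : k ≤ y - j)]
        rw [hs, hk (i, j + k) (le_refl _) hix 1 (by omega) (by omega)]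
        rw [if_neg (by omega), if_pos h, if_neg (by omega), if_neg (by omega)]
        ring
      · have hs : stp k = (i, j + k) := by simp only [hstp]; rw [if_pos (by omega : k ≤ y - j)]
        rw [hs, hk (i, j + k) (le_refl _) hix 2 (by omega) (by omega)]
        rw [if_neg (by omega), if_neg (by omega), if_pos h, if_neg (by omega)]
        ring
      · have hs : stp k = (i, j + k) := by simp only [hstp]; rw [if_pos (by omega : k ≤ y - j)]
        rw [hs, hk (i, j + k) (le_refl _) hix 3 (by omega) (by omega)]
        rw [if_neg (by omega), if_neg (by omega), if_neg (by omega), if_pos h]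
        ring
      · have hs : stp k = (i, j + k) := by simp only [hstp]; rw [if_pos (by omega : k ≤ y - j)]
        rw [hs, h0 (i, j + k) (le_refl _) hix (by right; constructor <;> omega)]
        rw [if_neg (by omega), if_neg (by omega), if_neg (by omega), if_neg (by omega)]
        ring
      · have hs : stp k = (i + (k - (y - j)), y) := by
          simp only [hstp]; rw [if_neg (by omega : ¬ k ≤ y - j)]
        rw [hs, h0 (i + (k - (y - j)), y) (by omega) (by omega)
          (by right; constructor <;> omega)]
        rw [if_neg (by omega), if_neg (by omega), if_neg (by omega), if_neg (by omega)]
        ring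
    rw [Finset.sum_congr rfl key]
    rw [Finset.sum_add_distrib, Finset.sum_add_distrib, Finset.sum_add_distrib]
    rw [Finset.sum_ite_eq' (Finset.range (N + 1)) (q - j) (fun _ => e 0),
      Finset.sum_ite_eq' (Finset.range (N + 1)) (q + 1 - j) (fun _ => e 1),
      Finset.sum_ite_eq' (Finset.range (N + 1)) (q + 2 - j) (fun _ => e 2),
      Finset.sum_ite_eq' (Finset.range (N + 1)) (q + 3 - j) (fun _ => e 3)]
    rw [if_pos (by rw [Finset.mem_range]; omega), if_pos (by rw [Finset.mem_range]; omega),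
      if_pos (by rw [Finset.mem_range]; omega), if_pos (by rw [Finset.mem_range]; omega)]
  have hmem : (e 0 + e 1 + e 2 + e 3) ∈
      {t : ℝ | ∃ π, MPath π (i, j) (x, y) ∧ t = vcost W π} :=
    ⟨π₀, ⟨hne, hhead, hlast, hchain⟩, hcost.symm⟩
  have hlb : ∀ t ∈ {t : ℝ | ∃ π, MPath π (i, j) (x, y) ∧ t = vcost W π},
      e 0 + e 1 + e 2 + e 3 ≤ t := by
    rintro t ⟨π, ⟨hne', hh, hl, hch⟩, rfl⟩
    have hrow : ∀ v ∈ π, i ≤ v.1 ∧ v.1 ≤ x := by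
      intro v hv
      have h1 := chain_head_le π hch (i, j) hh v hv
      have h2 := chain_last_ge π hch (x, y) hl v hv
      exact ⟨h1.1, h2.1⟩
    have := core_lb W i x q e hW hk π hch hrow (x, y) hl (by simpa using hqy) (i, j) hh
    have hG : Gfun q e (i, j).2 = e 0 + e 1 + e 2 + e 3 := by
      unfold Gfun
      rw [if_pos (by simp; omega), if_pos (by simp; omega), if_pos (by simp; omega),
        if_pos (by omega)]
    linarith [hG ▸ this]
  exact le_antisymm (csInf_le ⟨_, hlb⟩ hmem) (le_csInf ⟨_, hmem⟩ hlb)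

lemma mstep_swap {u v : ℕ × ℕ} (h : MStep u v) : MStep u.swap v.swap := by
  unfold MStep at *
  simp only [Prod.fst_swap, Prod.snd_swap]
  tauto

lemma mpath_swap {π : List (ℕ × ℕ)} {s t : ℕ × ℕ} (h : MPath π s t) :
    MPath (π.map Prod.swap) s.swap t.swap := by
  obtain ⟨hne, hh, hl, hc⟩ := h
  refine ⟨by simp [hne], ?_, ?_, ?_⟩
  · rw [List.head?_map, hh]; rfl
  · rw [List.getLast?_map, hl]; rfl
  · unfold List.Chain' at hc ⊢
    rw [List.isChain_map]
    exact hc.imp fun a b hab => mstep_swap hab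

lemma vcost_swap (W : ℕ × ℕ → ℝ) (π : List (ℕ × ℕ)) :
    vcost W (π.map Prod.swap) = vcost (fun v => W v.swap) π := by
  unfold vcost
  rw [List.map_map]
  rfl

lemma set_swap (W : ℕ × ℕ → ℝ) (s t : ℕ × ℕ) :
    {u : ℝ | ∃ π, MPath π s t ∧ u = vcost W π}
      = {u : ℝ | ∃ π, MPath π s.swap t.swap ∧ u = vcost (fun v => W v.swap) π} := by
  ext u
  constructor
  · rintro ⟨π, hp, rfl⟩
    refine ⟨π.map Prod.swap, mpath_swap hp, ?_⟩
    rw [vcost_swap]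
    simp [vcost, Prod.swap_swap]
  · rintro ⟨π, hp, rfl⟩
    refine ⟨π.map Prod.swap, ?_, ?_⟩
    · have := mpath_swap hp
      simpa using this
    · rw [vcost_swap]


def good (k : ℕ) : Prop := (k - 1) % 20 < 8 ∨ 11 < (k - 1) % 20

def seg (k : ℕ) : ℕ := (k + 7) / 20

def OK (nr nc : ℕ) (v : ℕ × ℕ) : Prop :=
  1 ≤ v.1 ∧ v.1 ≤ 20 * nr ∧ 1 ≤ v.2 ∧ v.2 ≤ 20 * nc ∧ good v.1 ∧ good v.2

lemma P_star_of_good (U : ℕ) (r d : ℕ → ℕ) (k : ℕ) (h : good k) :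
    Pcur U r d k = starPt U := by
  unfold good at h
  unfold Pcur alphaVal
  rw [if_neg (by omega), if_neg (by omega), if_neg (by omega), if_neg (by omega)]

lemma Q_star_of_good (U : ℕ) (c b : ℕ → ℕ) (k : ℕ) (h : good k) :
    Qcur U c b k = starPt U := by
  unfold good at h
  unfold Qcur betaVal
  rw [if_neg (by omega), if_neg (by omega), if_neg (by omega), if_neg (by omega)]

lemma P_good_of_star (U : ℕ) (hU : 1 ≤ U) (r d : ℕ → ℕ) (k : ℕ)
    (hr : 2 * r ((k - 1) / 20) < U) (hd : d ((k - 1) / 20) < U)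
    (h : Pcur U r d k = starPt U) : good k := by
  unfold good
  by_contra hc
  push_neg at hc
  unfold Pcur alphaVal starPt at h
  have hU' : (1 : ℝ) ≤ (U : ℝ) := by exact_mod_cast hU
  have hr' : 2 * (r ((k - 1) / 20) : ℝ) + 1 ≤ (U : ℝ) := by exact_mod_cast hr
  have hd' : (d ((k - 1) / 20) : ℝ) + 1 ≤ (U : ℝ) := by exact_mod_cast hd
  set o := (k - 1) % 20 with ho
  set R : ℝ := (r ((k - 1) / 20) : ℝ) with hR
  set D : ℝ := (d ((k - 1) / 20) : ℝ) with hD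
  have hR0 : 0 ≤ R := Nat.cast_nonneg _
  have hD0 : 0 ≤ D := Nat.cast_nonneg _
  rcases (by omega : o = 8 ∨ o = 9 ∨ o = 10 ∨ o = 11) with h8 | h8 | h8 | h8 <;>
    rw [h8] at h <;> norm_num at h <;> nlinarith [pow_pos (by linarith : (0:ℝ) < U) 5,
      pow_pos (by linarith : (0:ℝ) < U) 4, pow_pos (by linarith : (0:ℝ) < U) 3,
      pow_le_pow_left₀ (by linarith : (0:ℝ) ≤ 1) hU' 4,
      mul_le_mul_of_nonneg_right (by linarith : 2 * R ≤ (U:ℝ) - 1)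
        (by positivity : (0:ℝ) ≤ (U:ℝ)^3)]

lemma Q_good_of_star (U : ℕ) (hU : 1 ≤ U) (c b : ℕ → ℕ) (k : ℕ)
    (hc : 2 * c ((k - 1) / 20) < U)
    (h : Qcur U c b k = starPt U) : good k := by
  unfold good
  by_contra hcc
  push_neg at hcc
  unfold Qcur betaVal starPt at h
  have hU' : (1 : ℝ) ≤ (U : ℝ) := by exact_mod_cast hU
  have hc' : 2 * (c ((k - 1) / 20) : ℝ) + 1 ≤ (U : ℝ) := by exact_mod_cast hc
  set o := (k - 1) % 20 with ho
  set C : ℝ := (c ((k - 1) / 20) : ℝ) with hC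
  have hC0 : 0 ≤ C := Nat.cast_nonneg _
  have hsgn : ((-1 : ℝ)) ^ (b ((k - 1) / 20)) = 1 ∨ ((-1 : ℝ)) ^ (b ((k - 1) / 20)) = -1 := by
    rcases Nat.even_or_odd (b ((k - 1) / 20)) with he | he
    · exact Or.inl he.neg_one_pow
    · exact Or.inr he.neg_one_pow
  have f1 : (0:ℝ) < (U:ℝ)^5 := by positivity
  have f2 : (0:ℝ) < (U:ℝ)^3 := by positivity
  have f3 : (U:ℝ) ≤ (U:ℝ)^4 := by
    calc (U:ℝ) = (U:ℝ)^1 := (pow_one _).symm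
    _ ≤ (U:ℝ)^4 := pow_le_pow_right₀ hU' (by norm_num)
  have f6 : (U:ℝ) ≤ (U:ℝ)^3 := by
    calc (U:ℝ) = (U:ℝ)^1 := (pow_one _).symm
    _ ≤ (U:ℝ)^3 := pow_le_pow_right₀ hU' (by norm_num)
  have f4 : 2*C*(U:ℝ)^3 ≤ (U:ℝ)^4 - (U:ℝ)^3 := by
    have h1 := mul_le_mul_of_nonneg_right (by linarith : 2*C ≤ (U:ℝ) - 1) (le_of_lt f2)
    calc 2*C*(U:ℝ)^3 ≤ ((U:ℝ) - 1)*(U:ℝ)^3 := h1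
    _ = (U:ℝ)^4 - (U:ℝ)^3 := by ring
  have f5 : (0:ℝ) ≤ 2*C*(U:ℝ)^3 := by positivity
  rcases (by omega : o = 8 ∨ o = 9 ∨ o = 10 ∨ o = 11) with h8 | h8 | h8 | h8 <;>
    rw [h8] at h <;> norm_num at h
  · linarith
  · linarith
  · rcases hsgn with hs | hs <;> rw [hs] at h <;> linarith
  · rcases hsgn with hs | hs <;> rw [hs] at h <;> linarith

lemma king_symm {a b : ℕ × ℕ} (h : kingAdj a b) : kingAdj b a := by
  unfold kingAdj at *; omega

lemma rtg_symm {O : Set (ℕ × ℕ)} {a b : ℕ × ℕ}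
    (h : Relation.ReflTransGen (fun p q => p ∈ O ∧ q ∈ O ∧ kingAdj p q) a b) :
    Relation.ReflTransGen (fun p q => p ∈ O ∧ q ∈ O ∧ kingAdj p q) b a := by
  induction h with
  | refl => exact .refl
  | tail h1 h2 ih =>
    exact Relation.ReflTransGen.trans
      (Relation.ReflTransGen.single ⟨h2.2.1, h2.1, king_symm h2.2.2⟩) ih

lemma seg_step {nr nc : ℕ} (a b : ℕ × ℕ) (ha : OK nr nc a) (hb : OK nr nc b)
    (hk : kingAdj a b) : seg a.1 = seg b.1 ∧ seg a.2 = seg b.2 := by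
  unfold OK good at ha hb
  unfold kingAdj at hk
  unfold seg
  omega

lemma rtg_segs {nr nc : ℕ} {O : Set (ℕ × ℕ)} (hO : ∀ v, v ∈ O ↔ OK nr nc v) {a u : ℕ × ℕ}
    (h : Relation.ReflTransGen (fun p q => p ∈ O ∧ q ∈ O ∧ kingAdj p q) a u) :
    seg a.1 = seg u.1 ∧ seg a.2 = seg u.2 := by
  induction h with
  | refl => exact ⟨rfl, rfl⟩
  | tail h1 h2 ih =>
    have := seg_step _ _ ((hO _).1 h2.1) ((hO _).1 h2.2.1) h2.2.2
    omega

lemma rtg_row {nr nc : ℕ} {O : Set (ℕ × ℕ)} (hO : ∀ v, v ∈ O ↔ OK nr nc v) :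
    ∀ (n a w : ℕ), (a, w) ∈ O → (a + n, w) ∈ O → seg a = seg (a + n) →
      Relation.ReflTransGen (fun p q => p ∈ O ∧ q ∈ O ∧ kingAdj p q) (a, w) (a + n, w) := by
  intro n
  induction n with
  | zero => intro a w _ _ _; exact .refl
  | succ n ih =>
    intro a w h1 h2 hseg
    have o1 := (hO _).1 h1
    have o2 := (hO _).1 h2
    have hmid : (a + 1, w) ∈ O := (hO _).2 (by unfold OK good at *; unfold seg at hseg; omega)
    have hseg' : seg (a + 1) = seg (a + 1 + n) := by
      unfold OK good at o1 o2; unfold seg at *; omega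
    have h2' : (a + 1 + n, w) ∈ O := by rw [show a + 1 + n = a + (n + 1) by omega]; exact h2
    have step1 : (a, w) ∈ O ∧ (a + 1, w) ∈ O ∧ kingAdj (a, w) (a + 1, w) :=
      ⟨h1, hmid, by unfold kingAdj; omega⟩
    have htail := ih (a + 1) w hmid h2' hseg'
    refine Relation.ReflTransGen.head step1 ?_
    rw [show a + (n + 1) = a + 1 + n by omega]
    exact htail

lemma rtg_col {nr nc : ℕ} {O : Set (ℕ × ℕ)} (hO : ∀ v, v ∈ O ↔ OK nr nc v) :
    ∀ (n a w : ℕ), (w, a) ∈ O → (w, a + n) ∈ O → seg a = seg (a + n) →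
      Relation.ReflTransGen (fun p q => p ∈ O ∧ q ∈ O ∧ kingAdj p q) (w, a) (w, a + n) := by
  intro n
  induction n with
  | zero => intro a w _ _ _; exact .refl
  | succ n ih =>
    intro a w h1 h2 hseg
    have o1 := (hO _).1 h1
    have o2 := (hO _).1 h2
    have hmid : (w, a + 1) ∈ O := (hO _).2 (by unfold OK good at *; unfold seg at hseg; omega)
    have hseg' : seg (a + 1) = seg (a + 1 + n) := by
      unfold OK good at o1 o2; unfold seg at *; omega
    have h2' : (w, a + 1 + n) ∈ O := by rw [show a + 1 + n = a + (n + 1) by omega]; exact h2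
    have step1 : (w, a) ∈ O ∧ (w, a + 1) ∈ O ∧ kingAdj (w, a) (w, a + 1) :=
      ⟨h1, hmid, by unfold kingAdj; omega⟩
    have htail := ih (a + 1) w hmid h2' hseg'
    refine Relation.ReflTransGen.head step1 ?_
    rw [show a + (n + 1) = a + 1 + n by omega]
    exact htail

lemma rtg_row' {nr nc : ℕ} {O : Set (ℕ × ℕ)} (hO : ∀ v, v ∈ O ↔ OK nr nc v)
    (a a' w : ℕ) (h1 : (a, w) ∈ O) (h2 : (a', w) ∈ O) (hseg : seg a = seg a') :
    Relation.ReflTransGen (fun p q => p ∈ O ∧ q ∈ O ∧ kingAdj p q) (a, w) (a', w) := by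
  rcases le_or_gt a a' with h | h
  · have := rtg_row hO (a' - a) a w h1 (by rw [show a + (a' - a) = a' by omega]; exact h2)
      (by rw [show a + (a' - a) = a' by omega]; exact hseg)
    rw [show a + (a' - a) = a' by omega] at this
    exact this
  · have := rtg_row hO (a - a') a' w h2 (by rw [show a' + (a - a') = a by omega]; exact h1)
      (by rw [show a' + (a - a') = a by omega]; exact hseg.symm)
    rw [show a' + (a - a') = a by omega] at this
    exact rtg_symm this

lemma rtg_col' {nr nc : ℕ} {O : Set (ℕ × ℕ)} (hO : ∀ v, v ∈ O ↔ OK nr nc v)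
    (a a' w : ℕ) (h1 : (w, a) ∈ O) (h2 : (w, a') ∈ O) (hseg : seg a = seg a') :
    Relation.ReflTransGen (fun p q => p ∈ O ∧ q ∈ O ∧ kingAdj p q) (w, a) (w, a') := by
  rcases le_or_gt a a' with h | h
  · have := rtg_col hO (a' - a) a w h1 (by rw [show a + (a' - a) = a' by omega]; exact h2)
      (by rw [show a + (a' - a) = a' by omega]; exact hseg)
    rw [show a + (a' - a) = a' by omega] at this
    exact this
  · have := rtg_col hO (a - a') a' w h2 (by rw [show a' + (a - a') = a by omega]; exact h1)
      (by rw [show a' + (a - a') = a by omega]; exact hseg.symm)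
    rw [show a' + (a - a') = a by omega] at this
    exact rtg_symm this

lemma rtg_of_segs {nr nc : ℕ} {O : Set (ℕ × ℕ)} (hO : ∀ v, v ∈ O ↔ OK nr nc v)
    {u w : ℕ × ℕ} (hu : u ∈ O) (hw : w ∈ O)
    (h1 : seg u.1 = seg w.1) (h2 : seg u.2 = seg w.2) :
    Relation.ReflTransGen (fun p q => p ∈ O ∧ q ∈ O ∧ kingAdj p q) u w := by
  obtain ⟨u1, u2⟩ := u
  obtain ⟨w1, w2⟩ := w
  simp only at h1 h2
  have hmid : (w1, u2) ∈ O := by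
    have o1 := (hO _).1 hu
    have o2 := (hO _).1 hw
    exact (hO _).2 (by unfold OK good at *; exact ⟨o2.1, o2.2.1, o1.2.2.1, o1.2.2.2.1,
      o2.2.2.2.2.1, o1.2.2.2.2.2⟩)
  exact Relation.ReflTransGen.trans (rtg_row' hO u1 w1 u2 hu hmid h1)
    (rtg_col' hO u2 w2 w1 hmid hw h2)

lemma mem_block_segs {nr nc : ℕ} {O B : Set (ℕ × ℕ)} (hO : ∀ v, v ∈ O ↔ OK nr nc v)
    (hB : IsBlock O B) {u w : ℕ × ℕ} (hu : u ∈ B) (hw : w ∈ B) :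
    u ∈ O ∧ seg u.1 = seg w.1 ∧ seg u.2 = seg w.2 := by
  obtain ⟨v₀, hv₀, rfl⟩ := hB
  obtain ⟨huo, hur⟩ := hu
  obtain ⟨hwo, hwr⟩ := hw
  have h1 := rtg_segs hO hur
  have h2 := rtg_segs hO hwr
  exact ⟨huo, by omega, by omega⟩

lemma mem_block_of_segs {nr nc : ℕ} {O B : Set (ℕ × ℕ)} (hO : ∀ v, v ∈ O ↔ OK nr nc v)
    (hB : IsBlock O B) {u w : ℕ × ℕ} (hu : u ∈ B) (hw : w ∈ O)
    (h1 : seg u.1 = seg w.1) (h2 : seg u.2 = seg w.2) : w ∈ B := by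
  obtain ⟨v₀, hv₀, rfl⟩ := hB
  obtain ⟨huo, hur⟩ := hu
  exact ⟨hw, Relation.ReflTransGen.trans hur (rtg_of_segs hO huo hw h1 h2)⟩

lemma blocks_eq {nr nc : ℕ} {O B₁ B₂ : Set (ℕ × ℕ)} (hO : ∀ v, v ∈ O ↔ OK nr nc v)
    (hB₁ : IsBlock O B₁) (hB₂ : IsBlock O B₂) {p : ℕ × ℕ} (h1 : p ∈ B₁) (h2 : p ∈ B₂) :
    B₁ = B₂ := by
  ext u
  constructor
  · intro hu
    have h := mem_block_segs hO hB₁ hu h1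
    exact mem_block_of_segs hO hB₂ h2 h.1 h.2.1.symm h.2.2.symm
  · intro hu
    have h := mem_block_segs hO hB₂ hu h2
    exact mem_block_of_segs hO hB₁ h1 h.1 h.2.1.symm h.2.2.symm

lemma horiz_scenario {nr nc : ℕ} {O B₁ B₂ : Set (ℕ × ℕ)} (hO : ∀ v, v ∈ O ↔ OK nr nc v)
    (hB₁ : IsBlock O B₁) (hB₂ : IsBlock O B₂) (hne : B₁ ≠ B₂)
    (hadj : HorizAdj O B₁ B₂) {i j x y : ℕ}
    (hu : (i, j) ∈ B₁) (hv : (x, y) ∈ B₂) (hjy : j ≤ y) :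
    seg i = seg x ∧ seg y = seg j + 1 := by
  obtain ⟨x₀, y₁, y₂, hy12, hor, hno⟩ := hadj
  have hOu := (mem_block_segs hO hB₁ hu hu).1
  have hOv := (mem_block_segs hO hB₂ hv hv).1
  have hsix : seg i = seg x := by
    rcases hor with ⟨h1, h2⟩ | ⟨h1, h2⟩
    · have e1 := mem_block_segs hO hB₁ h1 hu
      have e2 := mem_block_segs hO hB₂ h2 hv
      simp only at e1 e2
      omega
    · have e1 := mem_block_segs hO hB₂ h1 hv
      have e2 := mem_block_segs hO hB₁ h2 hu
      simp only at e1 e2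
      omega
  have htne : seg j ≠ seg y := by
    intro he
    have hin : (x, y) ∈ B₁ := mem_block_of_segs hO hB₁ hu hOv hsix he
    exact hne (blocks_eq hO hB₁ hB₂ hin hv)
  have htlt : seg j < seg y := by unfold seg at *; omega
  rcases hor with ⟨h1, h2⟩ | ⟨h1, h2⟩
  swap
  · exfalso
    have e1 := mem_block_segs hO hB₂ h1 hv
    have e2 := mem_block_segs hO hB₁ h2 hu
    simp only at e1 e2
    unfold seg at *
    omega
  have e1 := mem_block_segs hO hB₁ h1 hu
  have e2 := mem_block_segs hO hB₂ h2 hv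
  simp only at e1 e2
  refine ⟨hsix, ?_⟩
  by_contra hcon
  unfold seg at hcon htlt
  have he1 : (y₁ + 7) / 20 = (j + 7) / 20 := by
    have := e1.2.2; unfold seg at this; exact this
  have he2 : (y₂ + 7) / 20 = (y + 7) / 20 := by
    have := e2.2.2; unfold seg at this; exact this
  have oy1 := (hO _).1 e1.1
  have oy2 := (hO _).1 e2.1
  unfold OK good at oy1 oy2
  simp only at oy1 oy2
  set col := 20 * ((j + 7) / 20) + 13 with hcol
  clear_value col
  have hc1 : y₁ < col := by omega
  have hc2 : col < y₂ := by omega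
  have hcolO : (x₀, col) ∈ O := by
    refine (hO _).2 ⟨oy1.1, oy1.2.1, by omega, by omega, oy1.2.2.2.2.1, ?_⟩
    unfold good
    simp only
    omega
  refine hno col hc1 hc2
    {u | u ∈ O ∧ Relation.ReflTransGen (fun a b => a ∈ O ∧ b ∈ O ∧ kingAdj a b) (x₀, col) u}
    ⟨(x₀, col), hcolO, rfl⟩ ?_ ?_ ⟨hcolO, Relation.ReflTransGen.refl⟩
  · intro he
    have hin : (x₀, col) ∈ B₁ := by rw [← he]; exact ⟨hcolO, Relation.ReflTransGen.refl⟩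
    have hseg2 := (mem_block_segs hO hB₁ hin hu).2.2
    simp only at hseg2
    unfold seg at hseg2
    omega
  · intro he
    have hin : (x₀, col) ∈ B₂ := by rw [← he]; exact ⟨hcolO, Relation.ReflTransGen.refl⟩
    have hseg2 := (mem_block_segs hO hB₂ hin hv).2.2
    simp only at hseg2
    unfold seg at hseg2
    omega

lemma vert_scenario {nr nc : ℕ} {O B₁ B₂ : Set (ℕ × ℕ)} (hO : ∀ v, v ∈ O ↔ OK nr nc v)
    (hB₁ : IsBlock O B₁) (hB₂ : IsBlock O B₂) (hne : B₁ ≠ B₂)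
    (hadj : VertAdj O B₁ B₂) {i j x y : ℕ}
    (hu : (i, j) ∈ B₁) (hv : (x, y) ∈ B₂) (hix : i ≤ x) :
    seg j = seg y ∧ seg x = seg i + 1 := by
  obtain ⟨y₀, x₁, x₂, hx12, hor, hno⟩ := hadj
  have hOu := (mem_block_segs hO hB₁ hu hu).1
  have hOv := (mem_block_segs hO hB₂ hv hv).1
  have hsix : seg j = seg y := by
    rcases hor with ⟨h1, h2⟩ | ⟨h1, h2⟩
    · have e1 := mem_block_segs hO hB₁ h1 hu
      have e2 := mem_block_segs hO hB₂ h2 hv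
      simp only at e1 e2
      omega
    · have e1 := mem_block_segs hO hB₂ h1 hv
      have e2 := mem_block_segs hO hB₁ h2 hu
      simp only at e1 e2
      omega
  have htne : seg i ≠ seg x := by
    intro he
    have hin : (x, y) ∈ B₁ := mem_block_of_segs hO hB₁ hu hOv he hsix
    exact hne (blocks_eq hO hB₁ hB₂ hin hv)
  have htlt : seg i < seg x := by unfold seg at *; omega
  rcases hor with ⟨h1, h2⟩ | ⟨h1, h2⟩
  swap
  · exfalso
    have e1 := mem_block_segs hO hB₂ h1 hv
    have e2 := mem_block_segs hO hB₁ h2 hu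
    simp only at e1 e2
    unfold seg at *
    omega
  have e1 := mem_block_segs hO hB₁ h1 hu
  have e2 := mem_block_segs hO hB₂ h2 hv
  simp only at e1 e2
  refine ⟨hsix, ?_⟩
  by_contra hcon
  unfold seg at hcon htlt
  have he1 : (x₁ + 7) / 20 = (i + 7) / 20 := by
    have := e1.2.1; unfold seg at this; exact this
  have he2 : (x₂ + 7) / 20 = (x + 7) / 20 := by
    have := e2.2.1; unfold seg at this; exact this
  have oy1 := (hO _).1 e1.1
  have oy2 := (hO _).1 e2.1
  unfold OK good at oy1 oy2
  simp only at oy1 oy2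
  set col := 20 * ((i + 7) / 20) + 13 with hcol
  clear_value col
  have hc1 : x₁ < col := by omega
  have hc2 : col < x₂ := by omega
  have hcolO : (col, y₀) ∈ O := by
    refine (hO _).2 ⟨by omega, by omega, oy1.2.2.1, oy1.2.2.2.1, ?_, oy1.2.2.2.2.2⟩
    unfold good
    simp only
    omega
  refine hno col hc1 hc2
    {u | u ∈ O ∧ Relation.ReflTransGen (fun a b => a ∈ O ∧ b ∈ O ∧ kingAdj a b) (col, y₀) u}
    ⟨(col, y₀), hcolO, rfl⟩ ?_ ?_ ⟨hcolO, Relation.ReflTransGen.refl⟩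
  · intro he
    have hin : (col, y₀) ∈ B₁ := by rw [← he]; exact ⟨hcolO, Relation.ReflTransGen.refl⟩
    have hseg2 := (mem_block_segs hO hB₁ hin hu).2.1
    simp only at hseg2
    unfold seg at hseg2
    omega
  · intro he
    have hin : (col, y₀) ∈ B₂ := by rw [← he]; exact ⟨hcolO, Relation.ReflTransGen.refl⟩
    have hseg2 := (mem_block_segs hO hB₂ hin hv).2.1
    simp only at hseg2
    unfold seg at hseg2
    omega

lemma beta_nonneg (U : ℕ) (c b : ℕ → ℕ) (t : ℕ) (hU : 1 ≤ U) (hc : 2 * c t < U) :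
    ∀ k, k < 4 → 0 ≤ betaVal U c b t (8 + k) := by
  intro k hk
  have hU' : (1 : ℝ) ≤ (U : ℝ) := by exact_mod_cast hU
  have hc' : 2 * (c t : ℝ) + 1 ≤ (U : ℝ) := by exact_mod_cast hc
  have hC0 : (0:ℝ) ≤ (c t : ℝ) := Nat.cast_nonneg _
  have f2 : (0:ℝ) < (U:ℝ)^3 := by positivity
  have f3 : (U:ℝ) ≤ (U:ℝ)^4 := by
    calc (U:ℝ) = (U:ℝ)^1 := (pow_one _).symm
    _ ≤ (U:ℝ)^4 := pow_le_pow_right₀ hU' (by norm_num)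
  have f6 : (U:ℝ) ≤ (U:ℝ)^3 := by
    calc (U:ℝ) = (U:ℝ)^1 := (pow_one _).symm
    _ ≤ (U:ℝ)^3 := pow_le_pow_right₀ hU' (by norm_num)
  have f4 : 2*(c t : ℝ)*(U:ℝ)^3 ≤ (U:ℝ)^4 - (U:ℝ)^3 := by
    have h1 := mul_le_mul_of_nonneg_right (by linarith : 2*(c t : ℝ) ≤ (U:ℝ) - 1) (le_of_lt f2)
    calc 2*(c t:ℝ)*(U:ℝ)^3 ≤ ((U:ℝ) - 1)*(U:ℝ)^3 := h1
    _ = (U:ℝ)^4 - (U:ℝ)^3 := by ring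
  have f5 : (0:ℝ) ≤ 2*(c t : ℝ)*(U:ℝ)^3 := by positivity
  have hsgn : ((-1 : ℝ)) ^ (b t) = 1 ∨ ((-1 : ℝ)) ^ (b t) = -1 := by
    rcases Nat.even_or_odd (b t) with he | he
    · exact Or.inl he.neg_one_pow
    · exact Or.inr he.neg_one_pow
  interval_cases k <;> unfold betaVal <;> norm_num
  · linarith
  · linarith
  · rcases hsgn with hs | hs <;> rw [hs] <;> linarith
  · rcases hsgn with hs | hs <;> rw [hs] <;> linarith

lemma alpha_nonneg (U : ℕ) (r d : ℕ → ℕ) (t : ℕ) (hU : 1 ≤ U) (hr : 2 * r t < U)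
    (hd : d t < U) : ∀ k, k < 4 → 0 ≤ alphaVal U r d t (8 + k) := by
  intro k hk
  have hU' : (1 : ℝ) ≤ (U : ℝ) := by exact_mod_cast hU
  have hr' : 2 * (r t : ℝ) + 1 ≤ (U : ℝ) := by exact_mod_cast hr
  have hd' : (d t : ℝ) + 1 ≤ (U : ℝ) := by exact_mod_cast hd
  have hR0 : (0:ℝ) ≤ (r t : ℝ) := Nat.cast_nonneg _
  have hD0 : (0:ℝ) ≤ (d t : ℝ) := Nat.cast_nonneg _
  have f2 : (0:ℝ) < (U:ℝ)^3 := by positivity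
  have f3 : (U:ℝ) ≤ (U:ℝ)^4 := by
    calc (U:ℝ) = (U:ℝ)^1 := (pow_one _).symm
    _ ≤ (U:ℝ)^4 := pow_le_pow_right₀ hU' (by norm_num)
  have f4 : 2*(r t : ℝ)*(U:ℝ)^3 ≤ (U:ℝ)^4 - (U:ℝ)^3 := by
    have h1 := mul_le_mul_of_nonneg_right (by linarith : 2*(r t : ℝ) ≤ (U:ℝ) - 1) (le_of_lt f2)
    calc 2*(r t:ℝ)*(U:ℝ)^3 ≤ ((U:ℝ) - 1)*(U:ℝ)^3 := h1
    _ = (U:ℝ)^4 - (U:ℝ)^3 := by ring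
  have f5 : (0:ℝ) ≤ 2*(r t : ℝ)*(U:ℝ)^3 := by positivity
  interval_cases k <;> unfold alphaVal <;> norm_num
  · positivity
  · linarith
  · linarith
  · linarith

/-- In the DTW lower-bound construction, if `B₁` and `B₂` are
two blocks that are horizontally or vertically adjacent, then for every
`u = (i,j) ∈ B₁` and `v = (x,y) ∈ B₂` with `i ≤ x` and `j ≤ y`, the minimum
cost of an xy-monotone path from `u` to `v` in the induced vertex-weighted grid
equals `4U⁵ + 10U⁴`. -/
theorem stmt5 (nr nc : ℕ) (hnr : 1 ≤ nr) (hnc : 1 ≤ nc)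
    (r d : ℕ → ℕ) (c b : ℕ → ℕ) (hb : ∀ j, b j ≤ 1) (U : ℕ)
    (hU : 100 * nr * nc * (1 + (Finset.range nr).sup d) ^ 2
        * (1 + (Finset.range nr).sup r) ^ 2
        * (1 + (Finset.range nc).sup c) ^ 2 < U)
    (B₁ B₂ : Set (ℕ × ℕ))
    (hB₁ : IsBlock (orangeSet nr nc U r d c b) B₁)
    (hB₂ : IsBlock (orangeSet nr nc U r d c b) B₂)
    (hne : B₁ ≠ B₂)
    (hadj : HorizAdj (orangeSet nr nc U r d c b) B₁ B₂ ∨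
            VertAdj (orangeSet nr nc U r d c b) B₁ B₂)
    (i j x y : ℕ) (hu : (i, j) ∈ B₁) (hv : (x, y) ∈ B₂)
    (hix : i ≤ x) (hjy : j ≤ y) :
    sInf {t : ℝ | ∃ π : List (ℕ × ℕ), MPath π (i, j) (x, y) ∧
        t = vcost (fun v => |Pcur U r d v.1 - Qcur U c b v.2|) π}
      = 4 * (U : ℝ) ^ 5 + 10 * (U : ℝ) ^ 4 := by
  set A := (Finset.range nr).sup d with hA
  set B := (Finset.range nr).sup r with hB
  set C := (Finset.range nc).sup c with hC
  have hU1 : 1 ≤ U := by omega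
  have hprod : ∀ X : ℕ, 2 * X + 1 ≤ (1 + X) ^ 2 := by
    intro X
    have : (1 + X) ^ 2 = X ^ 2 + 2 * X + 1 := by ring
    omega
  have hrball : ∀ i', i' < nr → 2 * r i' < U ∧ d i' < U := by
    intro i' hi
    have h1 : r i' ≤ B := Finset.le_sup (Finset.mem_range.mpr hi)
    have h2 : d i' ≤ A := Finset.le_sup (Finset.mem_range.mpr hi)
    have k1 := hprod B
    have k1' := hprod A
    have k2 : (1 + B) ^ 2 * (100 * nr * nc * (1 + A) ^ 2 * (1 + C) ^ 2)
        = 100 * nr * nc * (1 + A) ^ 2 * (1 + B) ^ 2 * (1 + C) ^ 2 := by ring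
    have k3 : (1 + B) ^ 2 ≤ (1 + B) ^ 2 * (100 * nr * nc * (1 + A) ^ 2 * (1 + C) ^ 2) :=
      Nat.le_mul_of_pos_right _ (by positivity)
    have k2' : (1 + A) ^ 2 * (100 * nr * nc * (1 + B) ^ 2 * (1 + C) ^ 2)
        = 100 * nr * nc * (1 + A) ^ 2 * (1 + B) ^ 2 * (1 + C) ^ 2 := by ring
    have k3' : (1 + A) ^ 2 ≤ (1 + A) ^ 2 * (100 * nr * nc * (1 + B) ^ 2 * (1 + C) ^ 2) :=
      Nat.le_mul_of_pos_right _ (by positivity)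
    omega
  have hcball : ∀ j', j' < nc → 2 * c j' < U := by
    intro j' hj
    have h1 : c j' ≤ C := Finset.le_sup (Finset.mem_range.mpr hj)
    have k1 := hprod C
    have k2 : (1 + C) ^ 2 * (100 * nr * nc * (1 + A) ^ 2 * (1 + B) ^ 2)
        = 100 * nr * nc * (1 + A) ^ 2 * (1 + B) ^ 2 * (1 + C) ^ 2 := by ring
    have k3 : (1 + C) ^ 2 ≤ (1 + C) ^ 2 * (100 * nr * nc * (1 + A) ^ 2 * (1 + B) ^ 2) :=
      Nat.le_mul_of_pos_right _ (by positivity)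
    omega
  have hOchar : ∀ v, v ∈ orangeSet nr nc U r d c b ↔ OK nr nc v := by
    intro v
    constructor
    · rintro ⟨h1, h2, h3, h4, h5, h6⟩
      refine ⟨h1, h2, h3, h4, ?_, ?_⟩
      · exact P_good_of_star U hU1 r d v.1 (hrball _ (by omega)).1 (hrball _ (by omega)).2 h5
      · exact Q_good_of_star U hU1 c b v.2 (hcball _ (by omega)) h6
    · rintro ⟨h1, h2, h3, h4, h5, h6⟩
      exact ⟨h1, h2, h3, h4, P_star_of_good U r d v.1 h5, Q_star_of_good U c b v.2 h6⟩
  rcases hadj with hadj | hadj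
  · -- horizontal
    obtain ⟨hsix, hseg⟩ := horiz_scenario hOchar hB₁ hB₂ hne hadj hu hv hjy
    have hOu := (mem_block_segs hOchar hB₁ hu hu).1
    have hOv := (mem_block_segs hOchar hB₂ hv hv).1
    have oU := (hOchar _).1 hOu
    have oV := (hOchar _).1 hOv
    unfold OK good at oU oV
    simp only at oU oV
    unfold seg at hsix hseg
    have hct : 2 * c ((j + 7) / 20) < U := hcball _ (by omega)
    have hbnn := beta_nonneg U c b ((j + 7) / 20) hU1 hct
    have hW : ∀ v : ℕ × ℕ, 0 ≤ |Pcur U r d v.1 - Qcur U c b v.2| := fun v => abs_nonneg _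
    have h0 : ∀ v : ℕ × ℕ, i ≤ v.1 → v.1 ≤ x →
        ((j ≤ v.2 ∧ v.2 < 20 * ((j + 7) / 20) + 9) ∨
          (20 * ((j + 7) / 20) + 9 + 3 < v.2 ∧ v.2 ≤ y)) →
        |Pcur U r d v.1 - Qcur U c b v.2| = 0 := by
      intro v h1 h2 h3
      rw [P_star_of_good U r d v.1 (by unfold good; omega),
        Q_star_of_good U c b v.2 (by unfold good; omega), sub_self, abs_zero]
    have hk : ∀ v : ℕ × ℕ, i ≤ v.1 → v.1 ≤ x → ∀ k, k < 4 →
        v.2 = 20 * ((j + 7) / 20) + 9 + k →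
        |Pcur U r d v.1 - Qcur U c b v.2|
          = (U : ℝ) ^ 5 + betaVal U c b ((j + 7) / 20) (8 + k) := by
      intro v h1 h2 k hk4 hv2
      have d1 : (v.2 - 1) / 20 = (j + 7) / 20 := by omega
      have d2 : (v.2 - 1) % 20 = 8 + k := by omega
      have hQ : Qcur U c b v.2 = betaVal U c b ((j + 7) / 20) (8 + k) := by
        unfold Qcur; rw [d1, d2]
      rw [P_star_of_good U r d v.1 (by unfold good; omega), hQ]
      unfold starPt
      have h5 := hbnn k hk4
      have hU5 : (0 : ℝ) ≤ (U : ℝ) ^ 5 := by positivity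
      rw [abs_of_nonpos (by linarith)]
      ring
    have hcore := core (fun v => |Pcur U r d v.1 - Qcur U c b v.2|) i j x y
      (20 * ((j + 7) / 20) + 9)
      (fun k => (U : ℝ) ^ 5 + betaVal U c b ((j + 7) / 20) (8 + k))
      hix (by omega) (by omega) hW h0 hk
    rw [hcore]
    simp only [betaVal]
    norm_num
    ring
  · -- vertical
    obtain ⟨hsjy, hseg⟩ := vert_scenario hOchar hB₁ hB₂ hne hadj hu hv hix
    have hOu := (mem_block_segs hOchar hB₁ hu hu).1
    have hOv := (mem_block_segs hOchar hB₂ hv hv).1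
    have oU := (hOchar _).1 hOu
    have oV := (hOchar _).1 hOv
    unfold OK good at oU oV
    simp only at oU oV
    unfold seg at hsjy hseg
    have hrt : 2 * r ((i + 7) / 20) < U ∧ d ((i + 7) / 20) < U := hrball _ (by omega)
    have hann := alpha_nonneg U r d ((i + 7) / 20) hU1 hrt.1 hrt.2
    rw [set_swap (fun v => |Pcur U r d v.1 - Qcur U c b v.2|) (i, j) (x, y)]
    simp only [Prod.swap_prod_mk, Prod.fst_swap, Prod.snd_swap]
    have hW : ∀ v : ℕ × ℕ, 0 ≤ |Pcur U r d v.2 - Qcur U c b v.1| := fun v => abs_nonneg _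
    have h0 : ∀ v : ℕ × ℕ, j ≤ v.1 → v.1 ≤ y →
        ((i ≤ v.2 ∧ v.2 < 20 * ((i + 7) / 20) + 9) ∨
          (20 * ((i + 7) / 20) + 9 + 3 < v.2 ∧ v.2 ≤ x)) →
        |Pcur U r d v.2 - Qcur U c b v.1| = 0 := by
      intro v h1 h2 h3
      rw [P_star_of_good U r d v.2 (by unfold good; omega),
        Q_star_of_good U c b v.1 (by unfold good; omega), sub_self, abs_zero]
    have hk : ∀ v : ℕ × ℕ, j ≤ v.1 → v.1 ≤ y → ∀ k, k < 4 →
        v.2 = 20 * ((i + 7) / 20) + 9 + k →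
        |Pcur U r d v.2 - Qcur U c b v.1|
          = (U : ℝ) ^ 5 + alphaVal U r d ((i + 7) / 20) (8 + k) := by
      intro v h1 h2 k hk4 hv2
      have d1 : (v.2 - 1) / 20 = (i + 7) / 20 := by omega
      have d2 : (v.2 - 1) % 20 = 8 + k := by omega
      have hP : Pcur U r d v.2 = alphaVal U r d ((i + 7) / 20) (8 + k) := by
        unfold Pcur; rw [d1, d2]
      rw [Q_star_of_good U c b v.1 (by unfold good; omega), hP]
      unfold starPt
      have h5 := hann k hk4
      have hU5 : (0 : ℝ) ≤ (U : ℝ) ^ 5 := by positivity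
      rw [abs_of_nonneg (by linarith)]
      ring
    have hcore := core (fun v => |Pcur U r d v.2 - Qcur U c b v.1|) j i y x
      (20 * ((i + 7) / 20) + 9)
      (fun k => (U : ℝ) ^ 5 + alphaVal U r d ((i + 7) / 20) (8 + k))
      hjy (by omega) (by omega) hW h0 hk
    rw [hcore]
    simp only [alphaVal]
    norm_num
    ring
end

section
/- Consider an Intermediary grid with parameters (n, m, (r_i), (c_j), (d_i), (b_j), U), and assume: n ≥ m ≥ 2; U > 1; (m−1)·max_i d_i < √U; and there exists a strictly increasing sequence of integers 0 ≤ s_0 < s_1 < … < s_{m−2} ≤ n−2 with r_{s_i} = c_i for every 0 ≤ i ≤ m−2. Then every minimum-weight directed path from (0,0) to (n−1,m−1) uses no horizontal arcs, exactly n−m vertical arcs, and exactly m−1 diagonal arcs; every diagonal arc (i,j)→(i+1,j+1) used by such a path satisfies r_i = c_j (hence has weight less than √U); and the total weight of such a path is strictly less than (n−m)·U + √U. -/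
/-- Weight of a directed path: the sum of the weights of its arcs. -/
noncomputable def acost (w : ℕ × ℕ → ℕ × ℕ → ℝ) (π : List (ℕ × ℕ)) : ℝ :=
  ((π.zip π.tail).map fun p => w p.1 p.2).sum

/-- Arc weights of the Intermediary grid: horizontal arcs `(i,j)→(i,j+1)` and
vertical arcs `(i,j)→(i+1,j)` have weight `U`; the diagonal arc
`(i,j)→(i+1,j+1)` has weight `d_i·b_j` if `r_i = c_j` and `√U` otherwise. -/
noncomputable def interW (r c d b : ℕ → ℕ) (U : ℕ) (u v : ℕ × ℕ) : ℝ :=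
  if v = (u.1 + 1, u.2 + 1) then
    (if r u.1 = c u.2 then ((d u.1 * b u.2 : ℕ) : ℝ) else Real.sqrt U)
  else (U : ℝ)

lemma list_range_map_sum (N : ℕ) (F : ℕ → ℝ) :
    ((List.range N).map F).sum = ∑ i ∈ Finset.range N, F i := rfl

lemma interW_nonneg (r c d b : ℕ → ℕ) (U : ℕ) (u v : ℕ × ℕ) :
    0 ≤ interW r c d b U u v := by
  unfold interW
  split <;> [skip; positivity]
  split <;> positivity

lemma zip_tail_range' (g : ℕ → ℕ × ℕ) : ∀ (k a : ℕ),
    ((List.range' a k).map g).zip (((List.range' a k).map g).tail)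
      = (List.range' a (k-1)).map (fun i => (g i, g (i+1)))
  | 0, a => by simp
  | 1, a => by simp
  | (k+2), a => by
      have ih := zip_tail_range' g (k+1) (a+1)
      simp only [List.range'_succ, List.map_cons, List.tail_cons, Nat.add_sub_cancel] at ih ⊢
      rw [List.zip_cons_cons, ih]
      rw [show k + 2 - 1 = k + 1 from rfl, List.range'_succ, List.map_cons]

lemma zip_tail_range (g : ℕ → ℕ × ℕ) (n : ℕ) :
    ((List.range n).map g).zip (((List.range n).map g).tail)
      = (List.range (n-1)).map (fun i => (g i, g (i+1))) := by
  rw [List.range_eq_range', List.range_eq_range', zip_tail_range']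

lemma acost_cons (w : ℕ × ℕ → ℕ × ℕ → ℝ) (a b : ℕ × ℕ) (l : List (ℕ × ℕ)) :
    acost w (a :: b :: l) = w a b + acost w (b :: l) := by
  simp [acost]

lemma key_s8 (r c d b : ℕ → ℕ) (U : ℕ) :
    ∀ (π : List (ℕ × ℕ)), π.Chain' MStep → ∀ a t : ℕ × ℕ,
      π.head? = some a → π.getLast? = some t →
      t.1 = a.1 + (π.zip π.tail).countP (fun p => decide (p.2 = (p.1.1 + 1, p.1.2)))
              + (π.zip π.tail).countP (fun p => decide (p.2 = (p.1.1 + 1, p.1.2 + 1))) ∧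
      t.2 = a.2 + (π.zip π.tail).countP (fun p => decide (p.2 = (p.1.1, p.1.2 + 1)))
              + (π.zip π.tail).countP (fun p => decide (p.2 = (p.1.1 + 1, p.1.2 + 1))) ∧
      (∀ v ∈ π, v.1 ≤ t.1 ∧ v.2 ≤ t.2) ∧
      acost (interW r c d b U) π =
        (((π.zip π.tail).countP (fun p => decide (p.2 = (p.1.1, p.1.2 + 1)))
          + (π.zip π.tail).countP (fun p => decide (p.2 = (p.1.1 + 1, p.1.2))) : ℕ) : ℝ) * U
        + (((π.zip π.tail).filter (fun p => decide (p.2 = (p.1.1 + 1, p.1.2 + 1)))).map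
            (fun p => interW r c d b U p.1 p.2)).sum
  | [], _, a, t, ha, _ => by simp at ha
  | [x], _, a, t, ha, ht => by
      simp at ha ht
      subst ha ht
      simp [acost]
  | x :: y :: l, hchain, a, t, ha, ht => by
      unfold List.Chain' at hchain
      rw [List.isChain_cons_cons] at hchain
      simp only [List.head?_cons, Option.some.injEq] at ha
      subst ha
      rw [List.getLast?_cons_cons] at ht
      obtain ⟨ih1, ih2, ih3, ih4⟩ := key_s8 r c d b U (y :: l) hchain.2 y t rfl ht
      simp only [List.tail_cons] at ih1 ih2 ih4
      have harcs : (x :: y :: l).zip (x :: y :: l).tail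
          = (x, y) :: (y :: l).zip (y :: l).tail := by simp
      have hyt := ih3 y (by simp)
      rw [acost_cons]
      rcases hchain.1 with ⟨h1, h2⟩ | ⟨h1, h2⟩ | ⟨h1, h2⟩
      · -- vertical
        have hy : y = (x.1 + 1, x.2) := by rw [Prod.ext_iff]; exact ⟨h1, h2⟩
        have e1 : (decide (y = (x.1 + 1, x.2))) = true := by simp [hy]
        have e2 : (decide (y = (x.1, x.2 + 1))) = false := by
          simp [hy, Prod.ext_iff]
        have e3 : (decide (y = (x.1 + 1, x.2 + 1))) = false := by
          simp [hy, Prod.ext_iff]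
        have ew : interW r c d b U x y = U := by
          rw [interW, if_neg]; simp [hy, Prod.ext_iff]
        refine ⟨?_, ?_, ?_, ?_⟩
        · simp only [harcs, List.countP_cons, e1, e2, e3, if_true, if_false]; norm_num
          omega
        · simp only [List.tail_cons, List.zip_cons_cons, List.countP_cons, e1, e2, e3]
          norm_num
          omega
        · intro v hv
          rcases List.mem_cons.1 hv with rfl | hv
          · constructor <;> omega
          · exact ih3 v hv
        · simp only [List.tail_cons, List.zip_cons_cons, List.countP_cons, List.filter_cons, e1, e2, e3]
          rw [ih4, ew]
          push_cast
          ring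
      · -- horizontal
        have hy : y = (x.1, x.2 + 1) := by rw [Prod.ext_iff]; exact ⟨h1, h2⟩
        have e1 : (decide (y = (x.1 + 1, x.2))) = false := by simp [hy, Prod.ext_iff]
        have e2 : (decide (y = (x.1, x.2 + 1))) = true := by simp [hy]
        have e3 : (decide (y = (x.1 + 1, x.2 + 1))) = false := by
          simp [hy, Prod.ext_iff]
        have ew : interW r c d b U x y = U := by
          rw [interW, if_neg]; simp [hy, Prod.ext_iff]
        refine ⟨?_, ?_, ?_, ?_⟩
        · simp only [harcs, List.countP_cons, e1, e2, e3, if_true, if_false]; norm_num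
          omega
        · simp only [List.tail_cons, List.zip_cons_cons, List.countP_cons, e1, e2, e3]
          norm_num
          omega
        · intro v hv
          rcases List.mem_cons.1 hv with rfl | hv
          · constructor <;> omega
          · exact ih3 v hv
        · simp only [List.tail_cons, List.zip_cons_cons, List.countP_cons, List.filter_cons, e1, e2, e3]
          rw [ih4, ew]
          push_cast
          ring
      · -- diagonal
        have hy : y = (x.1 + 1, x.2 + 1) := by rw [Prod.ext_iff]; exact ⟨h1, h2⟩
        have e1 : (decide (y = (x.1 + 1, x.2))) = false := by simp [hy, Prod.ext_iff]
        have e2 : (decide (y = (x.1, x.2 + 1))) = false := by simp [hy, Prod.ext_iff]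
        have e3 : (decide (y = (x.1 + 1, x.2 + 1))) = true := by simp [hy]
        refine ⟨?_, ?_, ?_, ?_⟩
        · simp only [harcs, List.countP_cons, e1, e2, e3, if_true, if_false]; norm_num
          omega
        · simp only [List.tail_cons, List.zip_cons_cons, List.countP_cons, e1, e2, e3]
          norm_num
          omega
        · intro v hv
          rcases List.mem_cons.1 hv with rfl | hv
          · constructor <;> omega
          · exact ih3 v hv
        · simp only [List.tail_cons, List.zip_cons_cons, List.countP_cons, List.filter_cons, e1, e2, e3]
          rw [ih4]
          push_cast
          simp
          ring

/-- In an Intermediary grid with `n ≥ m ≥ 2`, `U > 1`,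
`(m−1)·max_i d_i < √U`, and a strictly increasing sequence
`0 ≤ s_0 < … < s_{m−2} ≤ n−2` with `r_{s_i} = c_i`, every minimum-weight
directed path from `(0,0)` to `(n−1,m−1)` uses no horizontal arcs, exactly
`n−m` vertical arcs and exactly `m−1` diagonal arcs; every diagonal arc
`(i,j)→(i+1,j+1)` it uses satisfies `r_i = c_j` (hence has weight `< √U`); and
its total weight is strictly less than `(n−m)·U + √U`. -/
theorem stmt8 (n m : ℕ) (r c d b : ℕ → ℕ) (U : ℕ)
    (hb : ∀ j, b j ≤ 1)
    (hmn : m ≤ n) (hm : 2 ≤ m) (hU : 1 < U)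
    (hd : (((m - 1) * (Finset.range n).sup d : ℕ) : ℝ) < Real.sqrt U)
    (s : ℕ → ℕ)
    (hmono : ∀ i j : ℕ, i < j → j ≤ m - 2 → s i < s j)
    (hlast : s (m - 2) ≤ n - 2)
    (hid : ∀ i ≤ m - 2, r (s i) = c i) :
    ∀ π : List (ℕ × ℕ), MPath π (0, 0) (n - 1, m - 1) →
      (∀ π' : List (ℕ × ℕ), MPath π' (0, 0) (n - 1, m - 1) →
        acost (interW r c d b U) π ≤ acost (interW r c d b U) π') →
      ((π.zip π.tail).countP (fun p => decide (p.2 = (p.1.1, p.1.2 + 1))) = 0 ∧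
       (π.zip π.tail).countP (fun p => decide (p.2 = (p.1.1 + 1, p.1.2))) = n - m ∧
       (π.zip π.tail).countP (fun p => decide (p.2 = (p.1.1 + 1, p.1.2 + 1))) = m - 1) ∧
      (∀ p ∈ π.zip π.tail, p.2 = (p.1.1 + 1, p.1.2 + 1) →
        r p.1.1 = c p.1.2 ∧ interW r c d b U p.1 p.2 < Real.sqrt U) ∧
      acost (interW r c d b U) π < ((n - m : ℕ) : ℝ) * (U : ℝ) + Real.sqrt U := by
  intro π hπ hopt
  set M := (Finset.range n).sup d with hM
  -- the column function of the witness path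
  set f : ℕ → ℕ := fun i => ((Finset.range (m-1)).filter (fun t => s t < i)).card with hf
  set g : ℕ → ℕ × ℕ := fun i => (i, f i) with hg
  have hsm : ∀ t t', t < t' → t' ≤ m - 2 → s t < s t' := hmono
  have hs_le : ∀ t, t < m - 1 → s t ≤ n - 2 := by
    intro t ht
    rcases eq_or_lt_of_le (show t ≤ m - 2 by omega) with h | h
    · rw [h]; exact hlast
    · exact le_trans (le_of_lt (hmono t (m-2) h le_rfl)) hlast
  have hsinj : ∀ t t', t < m - 1 → t' < m - 1 → s t = s t' → t = t' := by
    intro t t' ht ht' he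
    by_contra hne
    rcases Nat.lt_or_ge t t' with h | h
    · exact absurd he (Nat.ne_of_lt (hmono t t' h (by omega)))
    · have : t' < t := by omega
      exact absurd he.symm (Nat.ne_of_lt (hmono t' t this (by omega)))
  have hf0 : f 0 = 0 := by
    simp [hf]
  have hfn : f (n-1) = m - 1 := by
    simp only [hf]
    have : (Finset.range (m-1)).filter (fun t => s t < n-1) = Finset.range (m-1) := by
      apply Finset.filter_true_of_mem
      intro t ht
      have := hs_le t (Finset.mem_range.1 ht)
      omega
    rw [this, Finset.card_range]
  have hfs : ∀ t, t < m - 1 → f (s t) = t := by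
    intro t ht
    simp only [hf]
    have : (Finset.range (m-1)).filter (fun t' => s t' < s t) = Finset.range t := by
      ext t'
      simp only [Finset.mem_filter, Finset.mem_range]
      constructor
      · rintro ⟨h1, h2⟩
        by_contra hc
        push_neg at hc
        rcases eq_or_lt_of_le hc with h | h
        · rw [h] at h2; omega
        · exact absurd h2 (not_lt_of_ge (le_of_lt (hmono t t' h (by omega))))
      · intro h
        exact ⟨by omega, hmono t' t h (by omega)⟩
    rw [this, Finset.card_range]
  have hstep1 : ∀ i t, t < m - 1 → s t = i → f (i+1) = f i + 1 := by
    intro i t ht hst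
    simp only [hf]
    have hsplit : (Finset.range (m-1)).filter (fun t' => s t' < i + 1)
        = insert t ((Finset.range (m-1)).filter (fun t' => s t' < i)) := by
      ext t'
      simp only [Finset.mem_filter, Finset.mem_range, Finset.mem_insert]
      constructor
      · rintro ⟨h1, h2⟩
        rcases Nat.lt_or_ge (s t') i with h | h
        · exact Or.inr ⟨h1, h⟩
        · have : s t' = i := by omega
          exact Or.inl (hsinj t' t h1 ht (by omega))
      · rintro (rfl | ⟨h1, h2⟩)
        · exact ⟨ht, by omega⟩
        · exact ⟨h1, by omega⟩
    rw [hsplit, Finset.card_insert_of_notMem]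
    simp only [Finset.mem_filter, Finset.mem_range, not_and]
    intro _
    omega
  have hstep0 : ∀ i, (¬ ∃ t, t < m - 1 ∧ s t = i) → f (i+1) = f i := by
    intro i hP
    simp only [hf]
    congr 1
    ext t'
    simp only [Finset.mem_filter, Finset.mem_range]
    constructor
    · rintro ⟨h1, h2⟩
      refine ⟨h1, ?_⟩
      rcases Nat.lt_or_ge (s t') i with h | h
      · exact h
      · exact absurd ⟨t', h1, by omega⟩ hP
    · rintro ⟨h1, h2⟩
      exact ⟨h1, by omega⟩
  -- the witness path
  set π₀ : List (ℕ × ℕ) := (List.range n).map g with hπ₀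
  obtain ⟨k, hk⟩ : ∃ k, n = k + 1 := ⟨n - 1, by omega⟩
  have hstepg : ∀ i, i < n - 1 → MStep (g i) (g (i+1)) := by
    intro i hi
    by_cases hP : ∃ t, t < m - 1 ∧ s t = i
    · obtain ⟨t, ht, hst⟩ := hP
      right; right
      exact ⟨rfl, by simp only [hg]; exact hstep1 i t ht hst⟩
    · left
      exact ⟨rfl, by simp only [hg]; exact hstep0 i hP⟩
  have hMP : MPath π₀ (0, 0) (n - 1, m - 1) := by
    refine ⟨?_, ?_, ?_, ?_⟩
    · simp [hπ₀, hk]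
    · rw [hπ₀, hk, List.range_succ_eq_map]
      simp only [List.map_cons, List.head?_cons]
      rw [hg]
      simp [hf0]
    · rw [hπ₀, hk, List.range_succ, List.map_append]
      simp only [List.map_cons, List.map_nil]
      rw [List.getLast?_concat]
      have : g k = (k + 1 - 1, m - 1) := by
        simp only [hg, Prod.mk.injEq, Nat.add_sub_cancel]
        refine ⟨trivial, ?_⟩
        rw [show k = n - 1 by omega]
        exact hfn
      rw [this]
    · unfold List.Chain'
      rw [hπ₀, List.isChain_map, hk, List.isChain_range_succ]
      intro i hi
      exact hstepg i (by omega)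
  have harc : π₀.zip π₀.tail = (List.range (n-1)).map (fun i => (g i, g (i+1))) :=
    zip_tail_range g n
  have hcost0 : acost (interW r c d b U) π₀
      = ∑ i ∈ Finset.range (n-1), interW r c d b U (g i) (g (i+1)) := by
    rw [acost, harc, List.map_map]
    exact list_range_map_sum _ _
  -- split the witness cost
  set img : Finset ℕ := (Finset.range (m-1)).image s with himg
  have himg_sub : img ⊆ Finset.range (n-1) := by
    intro i hi
    rw [himg, Finset.mem_image] at hi
    obtain ⟨t, ht, rfl⟩ := hi
    rw [Finset.mem_range]
    have := hs_le t (Finset.mem_range.1 ht)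
    omega
  have himg_card : img.card = m - 1 := by
    rw [himg, Finset.card_image_of_injOn, Finset.card_range]
    intro t ht t' ht' he
    exact hsinj t t' (Finset.mem_range.1 ht) (Finset.mem_range.1 ht') he
  have hfilter : (Finset.range (n-1)).filter (fun i => i ∈ img) = img := by
    rw [Finset.filter_mem_eq_inter, Finset.inter_eq_right]
    exact himg_sub
  have hcost_split : acost (interW r c d b U) π₀
      = (∑ i ∈ img, interW r c d b U (g i) (g (i+1)))
        + (((Finset.range (n-1)).filter (fun i => i ∉ img)).card : ℝ) * U := by
    rw [hcost0, ← Finset.sum_filter_add_sum_filter_not (Finset.range (n-1)) (fun i => i ∈ img),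
      hfilter]
    congr 1
    rw [Finset.sum_congr rfl (fun i hi => ?_), Finset.sum_const, nsmul_eq_mul]
    simp only [Finset.mem_filter, Finset.mem_range] at hi
    have hnot : ¬ ∃ t, t < m - 1 ∧ s t = i := by
      rintro ⟨t, ht, rfl⟩
      exact hi.2 (by rw [himg, Finset.mem_image]; exact ⟨t, Finset.mem_range.2 ht, rfl⟩)
    have : g (i+1) = (i+1, f i) := by
      simp only [hg]; rw [hstep0 i hnot]
    rw [this, interW]
    rw [if_neg]
    simp only [hg, Prod.mk.injEq]
    omega
  have hdiag_bound : ∀ i ∈ img, interW r c d b U (g i) (g (i+1)) ≤ (M : ℝ) := by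
    intro i hi
    rw [himg, Finset.mem_image] at hi
    obtain ⟨t, ht, rfl⟩ := hi
    rw [Finset.mem_range] at ht
    have h1 : g (s t + 1) = (s t + 1, f (s t) + 1) := by
      simp only [hg]; rw [hstep1 (s t) t ht rfl]
    rw [h1, interW, if_pos (by simp [hg])]
    rw [if_pos]
    · have hb' := hb (f (s t))
      have hd1 : d (s t) ≤ M := by
        rw [hM]
        apply Finset.le_sup
        rw [Finset.mem_range]
        have := hs_le t ht
        omega
      have : d (s t) * b ((s t, f (s t)).2) ≤ M := by
        simp only
        calc d (s t) * b (f (s t)) ≤ d (s t) * 1 := Nat.mul_le_mul_left _ (hb _)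
        _ = d (s t) := by omega
        _ ≤ M := hd1
      exact_mod_cast this
    · simp only [hg, hfs t ht]
      exact hid t (by omega)
  have hMlt : ((m - 1 : ℕ) : ℝ) * (M : ℝ) < Real.sqrt U := by
    calc ((m - 1 : ℕ) : ℝ) * (M : ℝ) = (((m-1) * M : ℕ) : ℝ) := by push_cast; ring
    _ < Real.sqrt U := hd
  have hMnn : (0:ℝ) ≤ M := by positivity
  have hcard_not : ((Finset.range (n-1)).filter (fun i => i ∉ img)).card = n - m := by
    have := Finset.card_filter_add_card_filter_not (s := Finset.range (n-1))
      (p := fun i => i ∈ img)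
    rw [hfilter, himg_card, Finset.card_range] at this
    omega
  have hwit : acost (interW r c d b U) π₀ < ((n - m : ℕ) : ℝ) * U + Real.sqrt U := by
    rw [hcost_split, hcard_not]
    have hsum : (∑ i ∈ img, interW r c d b U (g i) (g (i+1))) ≤ ((m-1 : ℕ) : ℝ) * M := by
      calc (∑ i ∈ img, interW r c d b U (g i) (g (i+1))) ≤ img.card • (M : ℝ) :=
        Finset.sum_le_card_nsmul _ _ _ hdiag_bound
      _ = ((m-1 : ℕ) : ℝ) * M := by rw [himg_card, nsmul_eq_mul]
    have := lt_of_le_of_lt hsum hMlt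
    linarith
  -- now analyze the optimal path
  have hA : acost (interW r c d b U) π < ((n - m : ℕ) : ℝ) * U + Real.sqrt U :=
    lt_of_le_of_lt (hopt π₀ hMP) hwit
  obtain ⟨hne, hhead, hgl, hchain⟩ := hπ
  obtain ⟨k1, k2, k3, k4⟩ := key_s8 r c d b U π hchain (0,0) (n-1,m-1) hhead hgl
  simp only at k1 k2
  set cH := (π.zip π.tail).countP (fun p => decide (p.2 = (p.1.1, p.1.2 + 1))) with hcH
  set cV := (π.zip π.tail).countP (fun p => decide (p.2 = (p.1.1 + 1, p.1.2))) with hcV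
  set cD := (π.zip π.tail).countP (fun p => decide (p.2 = (p.1.1 + 1, p.1.2 + 1))) with hcD
  set S := (((π.zip π.tail).filter (fun p => decide (p.2 = (p.1.1 + 1, p.1.2 + 1)))).map
      (fun p => interW r c d b U p.1 p.2)).sum with hS
  have hSnn : 0 ≤ S := by
    apply List.sum_nonneg
    intro x hx
    rw [List.mem_map] at hx
    obtain ⟨p, _, rfl⟩ := hx
    exact interW_nonneg r c d b U p.1 p.2
  have hsqrt_lt : Real.sqrt U < (U : ℝ) := by
    nlinarith [Real.sq_sqrt (show (0:ℝ) ≤ U by positivity), Real.sqrt_nonneg (U:ℝ),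
      show (1:ℝ) < U by exact_mod_cast hU]
  have hsqrt_nn : (0:ℝ) ≤ Real.sqrt U := Real.sqrt_nonneg _
  have hUnn : (0:ℝ) ≤ U := by positivity
  have hcH0 : cH = 0 := by
    by_contra hc
    have h1 : n - m + 2 ≤ cH + cV := by omega
    have : ((n - m : ℕ) : ℝ) * U + Real.sqrt U ≤ acost (interW r c d b U) π := by
      rw [k4]
      have h2 : ((n - m + 2 : ℕ) : ℝ) * U ≤ ((cH + cV : ℕ) : ℝ) * U := by
        apply mul_le_mul_of_nonneg_right _ hUnn
        exact_mod_cast h1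
      push_cast at h2 ⊢
      nlinarith
    linarith
  have hcV : cV = n - m := by omega
  have hcD : cD = m - 1 := by omega
  refine ⟨⟨hcH0, hcV, hcD⟩, ?_, hA⟩
  intro p hp hdiagp
  have hgood : r p.1.1 = c p.1.2 := by
    by_contra hbad
    have hw : interW r c d b U p.1 p.2 = Real.sqrt U := by
      rw [interW, if_pos hdiagp, if_neg hbad]
    have hmem : interW r c d b U p.1 p.2 ∈
        (((π.zip π.tail).filter (fun p => decide (p.2 = (p.1.1 + 1, p.1.2 + 1)))).map
          (fun p => interW r c d b U p.1 p.2)) := by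
      apply List.mem_map_of_mem
      rw [List.mem_filter]
      exact ⟨hp, by simp [hdiagp]⟩
    have hSge : Real.sqrt U ≤ S := by
      rw [← hw]
      apply List.single_le_sum _ _ hmem
      intro x hx
      rw [List.mem_map] at hx
      obtain ⟨q, _, rfl⟩ := hx
      exact interW_nonneg r c d b U q.1 q.2
    have : ((n - m : ℕ) : ℝ) * U + Real.sqrt U ≤ acost (interW r c d b U) π := by
      rw [k4, hcH0, hcV]
      simp only [Nat.zero_add]
      linarith
    linarith
  refine ⟨hgood, ?_⟩
  have hw : interW r c d b U p.1 p.2 = ((d p.1.1 * b p.1.2 : ℕ) : ℝ) := by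
    rw [interW, if_pos hdiagp, if_pos hgood]
  have hp2 : p.2 ∈ π := by
    have := List.of_mem_zip hp
    exact List.mem_of_mem_tail this.2
  have hple := (k3 p.2 hp2).1
  have hp1n : p.1.1 < n := by
    rw [hdiagp] at hple
    simp only at hple
    omega
  have hdM : d p.1.1 * b p.1.2 ≤ (m - 1) * M := by
    calc d p.1.1 * b p.1.2 ≤ d p.1.1 * 1 := Nat.mul_le_mul_left _ (hb _)
    _ = d p.1.1 := by omega
    _ ≤ M := Finset.le_sup (Finset.mem_range.2 hp1n)
    _ ≤ (m-1) * M := Nat.le_mul_of_pos_left M (by omega)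
  rw [hw]
  calc ((d p.1.1 * b p.1.2 : ℕ) : ℝ) ≤ (((m-1) * M : ℕ) : ℝ) := by exact_mod_cast hdM
  _ < Real.sqrt U := hd
end

section
/- Consider an Intermediary grid with parameters (n, m, (r_i), (c_j), (d_i), (b_j), U), and assume n ≥ m ≥ 2 and that there exists a strictly increasing sequence of integers 0 ≤ s_0 < s_1 < … < s_{m−2} ≤ n−2 with r_{s_i} = c_i for every 0 ≤ i ≤ m−2. Then there exists a directed path from (0,0) to (n−1,m−1) that uses no horizontal arcs, uses exactly the diagonal arcs (s_j, j)→(s_j+1, j+1) for 0 ≤ j ≤ m−2 (and otherwise vertical arcs), and has total weight exactly (n−m)·U + Σ_{j=0}^{m−2} d_{s_j}·b_j. -/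
lemma zip_tail_map_range {α : Type*} : ∀ (n : ℕ) (g : ℕ → α),
    ((List.range n).map g).zip ((List.range n).map g).tail
      = (List.range (n-1)).map (fun i => (g i, g (i+1)))
  | 0, _ => by simp
  | 1, g => by simp [List.range_succ]
  | (k+2), g => by
    have IH := zip_tail_map_range (k+1) (fun i => g (i+1))
    rw [List.range_succ_eq_map (n := k+1)]
    rw [List.range_succ_eq_map (n := k)] at IH ⊢
    simp only [List.map_cons, List.map_map, List.tail_cons, List.zip_cons_cons,
      Function.comp_def, Nat.succ_eq_add_one] at IH ⊢
    rw [IH]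
    have : k + 2 - 1 = k + 1 := rfl
    rw [this, List.range_succ_eq_map (n := k)]
    simp [Function.comp_def]

def colOf (m : ℕ) (s : ℕ → ℕ) (i : ℕ) : ℕ :=
  ((Finset.range (m-1)).filter (fun j => s j < i)).card

lemma colOf_zero (m s) : colOf m s 0 = 0 := by simp [colOf]

lemma colOf_succ (m : ℕ) (s : ℕ → ℕ) (i : ℕ) :
    colOf m s (i+1) = colOf m s i + ((Finset.range (m-1)).filter (fun j => s j = i)).card := by
  unfold colOf
  rw [← Finset.card_union_of_disjoint]
  · congr 1
    ext k
    simp only [Finset.mem_union, Finset.mem_filter, Finset.mem_range]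
    omega
  · rw [Finset.disjoint_filter]
    intro k _ h1
    omega

lemma colOf_succ_of_not (m : ℕ) (s : ℕ → ℕ) (i : ℕ) (h : ∀ j < m - 1, s j ≠ i) :
    colOf m s (i+1) = colOf m s i := by
  rw [colOf_succ]
  have : (Finset.range (m-1)).filter (fun j => s j = i) = ∅ := by
    ext k; simp only [Finset.mem_filter, Finset.mem_range, Finset.notMem_empty, iff_false]
    rintro ⟨hk, he⟩; exact h k hk he
  simp [this]

lemma colOf_succ_of_eq (m : ℕ) (s : ℕ → ℕ) (j : ℕ)
    (hinj : ∀ j k, j < m - 1 → k < m - 1 → s j = s k → j = k) (hj : j < m - 1) :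
    colOf m s (s j + 1) = colOf m s (s j) + 1 := by
  rw [colOf_succ]
  have : (Finset.range (m-1)).filter (fun k => s k = s j) = {j} := by
    ext k
    simp only [Finset.mem_filter, Finset.mem_range, Finset.mem_singleton]
    constructor
    · rintro ⟨hk, he⟩; exact hinj k j hk hj he
    · rintro rfl; exact ⟨hj, rfl⟩
  simp [this]

lemma colOf_s (m : ℕ) (s : ℕ → ℕ) (j : ℕ)
    (hstrict : ∀ j k, j < k → k < m - 1 → s j < s k) (hj : j < m - 1) :
    colOf m s (s j) = j := by
  unfold colOf
  have : (Finset.range (m-1)).filter (fun k => s k < s j) = Finset.range j := by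
    ext k
    simp only [Finset.mem_filter, Finset.mem_range]
    constructor
    · rintro ⟨hk, hlt⟩
      by_contra h
      push_neg at h
      rcases eq_or_lt_of_le h with rfl | h'
      · omega
      · exact absurd (hstrict j k h' hk) (by omega)
    · intro hk
      exact ⟨by omega, hstrict k j hk hj⟩
  rw [this, Finset.card_range]

lemma sum_map_range (k : ℕ) (g : ℕ → ℝ) :
    ((List.range k).map g).sum = ∑ i ∈ Finset.range k, g i := by
  induction k with
  | zero => simp
  | succ k ih => rw [List.range_succ, Finset.sum_range_succ]; simp [ih]

/-- In an Intermediary grid with `n ≥ m ≥ 2` and a strictly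
increasing sequence `0 ≤ s_0 < … < s_{m−2} ≤ n−2` with `r_{s_i} = c_i`, there
exists a directed path from `(0,0)` to `(n−1,m−1)` that uses no horizontal
arcs, uses exactly the diagonal arcs `(s_j, j)→(s_j+1, j+1)` for
`0 ≤ j ≤ m−2` (and otherwise vertical arcs), and has total weight exactly
`(n−m)·U + Σ_{j=0}^{m−2} d_{s_j}·b_j`. -/
theorem stmt9 (n m : ℕ) (r c d b : ℕ → ℕ) (U : ℕ)
    (hb : ∀ j, b j ≤ 1) (hU : 0 < U)
    (hmn : m ≤ n) (hm : 2 ≤ m)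
    (s : ℕ → ℕ)
    (hmono : ∀ i j : ℕ, i < j → j ≤ m - 2 → s i < s j)
    (hlast : s (m - 2) ≤ n - 2)
    (hid : ∀ i ≤ m - 2, r (s i) = c i) :
    ∃ π : List (ℕ × ℕ), MPath π (0, 0) (n - 1, m - 1) ∧
      (π.zip π.tail).countP (fun p => decide (p.2 = (p.1.1, p.1.2 + 1))) = 0 ∧
      (∀ p ∈ π.zip π.tail,
        p.2 = (p.1.1 + 1, p.1.2 + 1) ↔ ∃ j < m - 1, p.1 = (s j, j)) ∧
      acost (interW r c d b U) π
        = ((n - m : ℕ) : ℝ) * (U : ℝ)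
          + ((∑ j ∈ Finset.range (m - 1), d (s j) * b j : ℕ) : ℝ) := by
  classical
  have hstrict : ∀ j k, j < k → k < m - 1 → s j < s k :=
    fun j k h hk => hmono j k h (by omega)
  have hinj : ∀ j k, j < m - 1 → k < m - 1 → s j = s k → j = k := by
    intro j k hj hk he
    rcases lt_trichotomy j k with h | h | h
    · exact absurd he (by have := hstrict j k h hk; omega)
    · exact h
    · exact absurd he (by have := hstrict k j h hj; omega)
  set f : ℕ → ℕ := colOf m s with hfdef
  have hs_le : ∀ j, j < m - 1 → s j ≤ n - 2 := by
    intro j hj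
    rcases eq_or_lt_of_le (show j ≤ m - 2 by omega) with rfl | h
    · exact hlast
    · exact le_trans (le_of_lt (hmono j (m-2) h le_rfl)) hlast
  have hs_lt : ∀ j, j < m - 1 → s j < n - 1 := by
    intro j hj; have := hs_le j hj; omega
  have hfn : f (n-1) = m - 1 := by
    rw [hfdef]
    unfold colOf
    rw [Finset.filter_true_of_mem, Finset.card_range]
    intro j hj
    exact hs_lt j (Finset.mem_range.mp hj)
  -- step dichotomy
  have hstep : ∀ i, (∃ j, j < m - 1 ∧ s j = i ∧ f i = j ∧ f (i+1) = f i + 1) ∨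
      ((∀ j < m - 1, s j ≠ i) ∧ f (i+1) = f i) := by
    intro i
    by_cases h : ∃ j, j < m - 1 ∧ s j = i
    · obtain ⟨j, hj, he⟩ := h
      left
      refine ⟨j, hj, he, ?_, ?_⟩
      · rw [hfdef, ← he, colOf_s m s j hstrict hj]
      · rw [hfdef, ← he, colOf_succ_of_eq m s j hinj hj]
    · right
      push_neg at h
      exact ⟨h, colOf_succ_of_not m s i h⟩
  obtain ⟨k, rfl⟩ : ∃ k, n = k + 2 := ⟨n - 2, by omega⟩
  have hn1 : k + 2 - 1 = k + 1 := rfl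
  rw [hn1] at hfn hs_lt
  set g : ℕ → ℕ × ℕ := fun i => (i, f i) with hgdef
  set π : List (ℕ × ℕ) := (List.range (k+2)).map g with hpi
  have hzip : π.zip π.tail = (List.range (k+1)).map (fun i => (g i, g (i+1))) := by
    rw [hpi]; exact zip_tail_map_range (k+2) g
  have hf0 : f 0 = 0 := colOf_zero m s
  refine ⟨π, ⟨?_, ?_, ?_, ?_⟩, ?_, ?_, ?_⟩
  · simp [hpi]
  · -- head?
    rw [hpi, List.range_succ_eq_map, List.map_cons, List.head?_cons, hgdef]
    simp [hf0]
  · -- getLast?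
    rw [hpi, List.range_succ, List.map_append,
      show List.map g [k+1] = [g (k+1)] from rfl, List.getLast?_concat, hgdef]
    simp [hfn, hn1]
  · -- Chain'
    rw [hpi]; show List.IsChain MStep _; rw [List.isChain_map]
    refine (List.isChain_range_succ _ (k+1)).mpr ?_
    intro i _
    rcases hstep i with ⟨j, hj, he, hfi, hfi1⟩ | ⟨_, hfi⟩ <;>
      · simp [MStep, hgdef, Prod.ext_iff]
        omega
  · -- no horizontal arcs
    rw [hzip, List.countP_eq_zero]
    intro p hp
    simp only [List.mem_map, List.mem_range] at hp
    obtain ⟨i, _, rfl⟩ := hp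
    simp [hgdef, Prod.ext_iff]
  · -- diagonal characterization
    intro p hp
    rw [hzip] at hp
    simp only [List.mem_map, List.mem_range] at hp
    obtain ⟨i, _, rfl⟩ := hp
    simp only [hgdef, Prod.mk.injEq, true_and]
    constructor
    · intro hdiag
      rcases hstep i with ⟨j, hj, he, hfi, _⟩ | ⟨_, hfi⟩
      · exact ⟨j, hj, he.symm, hfi⟩
      · omega
    · rintro ⟨j, hj, hij, hfij⟩
      rcases hstep i with ⟨j', hj', he, hfi, hfi1⟩ | ⟨hno, _⟩
      · omega
      · exact absurd hij.symm (hno j hj)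
  · -- cost
    unfold acost
    rw [hzip, List.map_map]
    have : ((fun p : (ℕ×ℕ)×(ℕ×ℕ) => interW r c d b U p.1 p.2) ∘ fun i => (g i, g (i+1)))
        = fun i => interW r c d b U (i, f i) (i+1, f (i+1)) := by
      funext i; simp [hgdef]
    rw [this, sum_map_range]
    set w : ℕ → ℝ := fun i => interW r c d b U (i, f i) (i+1, f (i+1)) with hwdef
    set T : Finset ℕ := (Finset.range (m-1)).image s with hTdef
    have hTsub : T ⊆ Finset.range (k+1) := by
      intro x hx
      rw [hTdef] at hx
      simp only [Finset.mem_image, Finset.mem_range] at hx ⊢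
      obtain ⟨j, hj, rfl⟩ := hx
      exact hs_lt j hj
    have hinjOn : ∀ x ∈ Finset.range (m-1), ∀ y ∈ Finset.range (m-1), s x = s y → x = y := by
      intro x hx y hy
      exact hinj x y (Finset.mem_range.mp hx) (Finset.mem_range.mp hy)
    have hcardT : T.card = m - 1 := by
      rw [hTdef, Finset.card_image_of_injOn hinjOn, Finset.card_range]
    have hvert : ∀ x ∈ Finset.range (k+1) \ T, w x = (U : ℝ) := by
      intro x hx
      rw [hTdef] at hx
      simp only [Finset.mem_sdiff, Finset.mem_range, Finset.mem_image, not_exists] at hx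
      obtain ⟨-, hxT⟩ := hx
      rcases hstep x with ⟨j, hj, he, _, _⟩ | ⟨_, hfx⟩
      · exact absurd he (by intro h; exact hxT j ⟨hj, h⟩)
      · simp only [hwdef]
        unfold interW
        rw [if_neg]
        simp only [Prod.mk.injEq, not_and]
        intro _
        omega
    have hdiagw : ∀ j < m - 1, w (s j) = ((d (s j) * b j : ℕ) : ℝ) := by
      intro j hj
      rcases hstep (s j) with ⟨j', hj', he, hfi, hfi1⟩ | ⟨hno, _⟩
      · have hjj : j' = j := hinj j' j hj' hj he
        subst hjj
        simp [hwdef, interW, hfi1, hfi, hid j' (by omega)]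
      · exact absurd rfl (hno j hj)
    rw [← Finset.sum_sdiff hTsub]
    have h1 : ∑ x ∈ Finset.range (k+1) \ T, w x = ((k + 2 - m : ℕ) : ℝ) * (U : ℝ) := by
      rw [Finset.sum_congr rfl hvert, Finset.sum_const, nsmul_eq_mul]
      congr 1
      rw [Finset.card_sdiff_of_subset hTsub, hcardT, Finset.card_range]
      norm_cast
      omega
    have h2 : ∑ x ∈ T, w x = ((∑ j ∈ Finset.range (m-1), d (s j) * b j : ℕ) : ℝ) := by
      rw [hTdef, Finset.sum_image hinjOn, Nat.cast_sum]
      exact Finset.sum_congr rfl fun j hj => hdiagw j (Finset.mem_range.mp hj)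
    rw [h1, h2]
end
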